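/- arXiv:2103.04746 — 6 statements merged into one kernel-verified Lean document; each statement's English description precedes it below -/
import Mathlib

section
/- Proposition 3.2(ii): Assume (H1) and (H2). Let x, y ∈ U_+ with x ≪ y, and let a_x ≫ x and a_y ≫ y satisfy [[x,a_x]] ∩ U_+ = ∅ and [[y,a_y]] ∩ U_+ = ∅ (as furnished by Proposition 3.2(i)). Then the two open order intervals are mutually disjoint: [[x,a_x]] ∩ [[y,a_y]] = ∅. The corresponding result holds for U_−. -/
open Set Topology Filter MeasureTheory Function

universe u

variable {E : Type u} [NormedAddCommGroup E] [NormedSpace ℝ E]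
  [MeasurableSpace E] [BorelSpace E]

/-- `x ≤ y` in the order induced by the cone `K`. -/
def coneLE (K : Set E) (x y : E) : Prop := y - x ∈ K

/-- `x < y` in the order induced by the cone `K`. -/
def coneLT (K : Set E) (x y : E) : Prop := coneLE K x y ∧ x ≠ y

/-- `x ≪ y` (strong ordering) induced by the cone `K`. -/
def coneLL (K : Set E) (x y : E) : Prop := y - x ∈ interior K

/-- `K` is a closed convex cone inducing a partial order. -/
def IsConeOrder (K : Set E) : Prop :=
  IsClosed K ∧ Convex ℝ K ∧
  (∀ x ∈ K, ∀ α : ℝ, 0 < α → α • x ∈ K) ∧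
  (∀ x ∈ K, ∀ y ∈ K, x + y ∈ K) ∧
  K ∩ (-K) = {0}

/-- Closed order interval `[a,b]`. -/
def ordCC (K : Set E) (a b : E) : Set E := {z | coneLE K a z ∧ coneLE K z b}

/-- Open order interval `[[a,b]]`. -/
def ordOO (K : Set E) (a b : E) : Set E := {z | coneLL K a z ∧ coneLL K z b}

/-- `X` is order-convex. -/
def OrderConvexSet (K X : Set E) : Prop :=
  ∀ a ∈ X, ∀ b ∈ X, coneLT K a b → ordCC K a b ⊆ X

/-- `F` is strongly monotone with respect to the cone `K`. -/
def StronglyMonotoneMap (K : Set E) (F : E → E) : Prop :=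
  ∀ x y : E, coneLT K x y → coneLL K (F x) (F y)

/-- The semi-orbit `O⁺(x)` of `x` under `F`. -/
def semiOrbit (F : E → E) (x : E) : Set E := {y | ∃ n : ℕ, y = F^[n] x}

/-- The ω-limit set of `x` under `F`. -/
def omegaSet (F : E → E) (x : E) : Set E := ⋂ k : ℕ, closure (semiOrbit F (F^[k] x))

/-- `F` is ω-compact in `S ⊆ X`. -/
def OmegaCompactIn (F : E → E) (X S : Set E) : Prop :=
  (∀ x ∈ S, IsCompact (closure (semiOrbit F x)) ∧ closure (semiOrbit F x) ⊆ X) ∧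
  IsCompact (closure (⋃ x ∈ S, omegaSet F x)) ∧ closure (⋃ x ∈ S, omegaSet F x) ⊆ X

/-- Hypothesis (H2): ω-compactness in every closed order interval of `X`. -/
def OmegaCompactIntervals (K : Set E) (F : E → E) (X : Set E) : Prop :=
  ∀ a ∈ X, ∀ b ∈ X, coneLE K a b → OmegaCompactIn F X (ordCC K a b)

/-- The upper ω-limit set `ω₊(x)`. -/
def omegaPlus (K : Set E) (F : E → E) (X : Set E) (x : E) : Set E :=
  ⋂ u ∈ {u ∈ X | coneLL K x u},
    closure (⋃ y ∈ {y ∈ X | coneLT K x y ∧ coneLE K y u}, omegaSet F y)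

/-- The lower ω-limit set `ω₋(x)`. -/
def omegaMinus (K : Set E) (F : E → E) (X : Set E) (x : E) : Set E :=
  ⋂ u ∈ {u ∈ X | coneLL K u x},
    closure (⋃ y ∈ {y ∈ X | coneLT K y x ∧ coneLE K u y}, omegaSet F y)

/-- The upper ω-unstable set `U₊`. -/
def Uplus (K : Set E) (F : E → E) (X : Set E) : Set E :=
  {x ∈ X | omegaPlus K F X x ≠ omegaSet F x}

/-- The lower ω-unstable set `U₋`. -/
def Uminus (K : Set E) (F : E → E) (X : Set E) : Set E :=
  {x ∈ X | omegaMinus K F X x ≠ omegaSet F x}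

/-- `q` is a periodic point of `F` with minimal period `p ≥ 1`. -/
def IsMinPeriodicPt (F : E → E) (p : ℕ) (q : E) : Prop :=
  1 ≤ p ∧ F^[p] q = q ∧ ∀ l : ℕ, 1 ≤ l → l < p → F^[l] q ≠ q

/-- `C` is a linearly stable cycle of `F`: the (semi-)orbit of a periodic point of some
minimal period `p` such that the spectral radius of the derivative of `F^[p]` at every
point of the cycle is at most `1`. -/
def IsLinearlyStableCycle (F : E → E) (C : Set E) : Prop :=
  ∃ (q : E) (p : ℕ), IsMinPeriodicPt F p q ∧ C = semiOrbit F q ∧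
    ∀ z ∈ semiOrbit F q, ∃ L : E →L[ℝ] E,
      HasFDerivAt (F^[p]) L z ∧ spectralRadius ℝ L ≤ 1

/-- Hypothesis (H3): `F` is C¹ and each derivative is a compact strongly positive operator. -/
def SmoothStronglyPositive (K : Set E) (F : E → E) : Prop :=
  ∃ F' : E → (E →L[ℝ] E), Continuous F' ∧ (∀ x : E, HasFDerivAt F (F' x) x) ∧
    (∀ x : E, IsCompactOperator ⇑(F' x)) ∧
    ∀ x v : E, coneLT K 0 v → coneLL K 0 (F' x v)

/-- A Borel set `W` is shy: there is a nonzero compactly supported Borel measure `μ` with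
`μ (x + W) = 0` for every `x`. -/
def IsShyBorel (W : Set E) : Prop :=
  MeasurableSet W ∧ ∃ μ : Measure E, μ ≠ 0 ∧
    (∃ Q : Set E, IsCompact Q ∧ μ Qᶜ = 0) ∧
    ∀ x : E, μ ((fun y => y - x) ⁻¹' W) = 0

/-- A set is shy if it is contained in a shy Borel set. -/
def IsShy (W : Set E) : Prop := ∃ W' : Set E, W ⊆ W' ∧ IsShyBorel W'

/-- `S` is prevalent in `A` if `A \ S` is shy. -/
def PrevalentIn (S A : Set E) : Prop := IsShy (A \ S)

/-- An order decomposition `(A, B')` of `X`: both nonempty, relatively closed in `X`,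
`A` lower closed, `B'` upper closed, `A ∪ B' = X` and `int (A ∩ B') = ∅`. -/
def IsOrderDecomp (K X A B' : Set E) : Prop :=
  A.Nonempty ∧ B'.Nonempty ∧ A ⊆ X ∧ B' ⊆ X ∧
  closure A ∩ X ⊆ A ∧ closure B' ∩ X ⊆ B' ∧
  (∀ a ∈ A, ∀ z ∈ X, coneLE K z a → z ∈ A) ∧
  (∀ b ∈ B', ∀ z ∈ X, coneLE K b z → z ∈ B') ∧
  A ∪ B' = X ∧ interior (A ∩ B') = ∅

/-- An invariant order decomposition of `X`. -/
def IsInvOrderDecomp (K X : Set E) (F : E → E) (A B' : Set E) : Prop :=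
  IsOrderDecomp K X A B' ∧ F '' A ⊆ A ∧ F '' B' ⊆ B'

/-- A set is unordered if it contains no two points `x < y`. -/
def UnorderedSet (K S : Set E) : Prop := ∀ x ∈ S, ∀ y ∈ S, ¬ coneLT K x y

/-- An invariant order resolution of `X`. -/
def IsInvOrderResolution (K X : Set E) (F : E → E) (Γ : Set (Set E × Set E)) : Prop :=
  (∀ p ∈ Γ, IsInvOrderDecomp K X F p.1 p.2) ∧
  (∀ p ∈ Γ, ∀ q ∈ Γ, p.1 ⊆ q.1 ∨ q.1 ⊆ p.1) ∧
  (∀ x ∈ X, UnorderedSet K (semiOrbit F x) → ∃ p ∈ Γ, semiOrbit F x ⊆ p.1 ∩ p.2)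

/-- Hypothesis (H4): the group `G` acts on `X` by an increasing, jointly continuous
action whose homeomorphisms commute with `F`. -/
def GroupActsOn {G : Type*} [Group G] [TopologicalSpace G]
    (K X : Set E) (F : E → E) (act : G → E → E) : Prop :=
  ContinuousOn (fun p : G × E => act p.1 p.2) (Set.univ ×ˢ X) ∧
  (∀ g : G, Set.MapsTo (act g) X X) ∧
  (∀ x ∈ X, act (1 : G) x = x) ∧
  (∀ g h : G, ∀ x ∈ X, act (g * h) x = act g (act h x)) ∧
  (∀ g : G, ∀ x ∈ X, ∀ y ∈ X, coneLE K x y → coneLE K (act g x) (act g y)) ∧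
  (∀ g : G, ∀ x ∈ X, act g (F x) = F (act g x))

/-- A set `S` is `G`-symmetric if every point of `S` is fixed by every group element. -/
def GSymmetricSet {G : Type*} (act : G → E → E) (S : Set E) : Prop :=
  ∀ z ∈ S, ∀ g : G, act g z = z

/-- Proposition 3.2(ii): under (H1) and (H2), for `x, y ∈ U₊` with `x ≪ y` and
`aₓ ≫ x`, `a_y ≫ y` furnished by Proposition 3.2(i) (so that the corresponding open
order intervals miss `U₊`), one has `[[x, aₓ]] ∩ [[y, a_y]] = ∅`;
correspondingly for `U₋`. -/
theorem prop32ii [CompleteSpace E] [TopologicalSpace.SeparableSpace E]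
    (K : Set E) (F : E → E) (X : Set E)
    -- (H1)
    (hK : IsConeOrder K) (hKint : (interior K).Nonempty)
    (hFc : Continuous F) (hFm : StronglyMonotoneMap K F)
    -- (H2)
    (hXopen : IsOpen X) (hXoc : OrderConvexSet K X) (hXinv : Set.MapsTo F X X)
    (hωc : OmegaCompactIntervals K F X) :
    (∀ x y ax ay : E, x ∈ Uplus K F X → y ∈ Uplus K F X → coneLL K x y →
      coneLL K x ax → coneLL K y ay →
      ordOO K x ax ∩ Uplus K F X = ∅ → ordOO K y ay ∩ Uplus K F X = ∅ →
      ordOO K x ax ∩ ordOO K y ay = ∅) ∧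
    (∀ x y ax ay : E, x ∈ Uminus K F X → y ∈ Uminus K F X → coneLL K y x →
      coneLL K ax x → coneLL K ay y →
      ordOO K ax x ∩ Uminus K F X = ∅ → ordOO K ay y ∩ Uminus K F X = ∅ →
      ordOO K ax x ∩ ordOO K ay y = ∅) := by
  -- Key fact: interior K + K ⊆ interior K.
  have hadd : ∀ a b : E, a ∈ interior K → b ∈ K → a + b ∈ interior K := by
    intro a b ha hb
    have hsub : (· + b) '' interior K ⊆ K := by
      rintro _ ⟨t, ht, rfl⟩
      exact hK.2.2.2.1 t (interior_subset ht) b hb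
    have hopen : IsOpen ((· + b) '' interior K) :=
      (isOpenMap_add_right b) _ isOpen_interior
    exact interior_maximal hsub hopen ⟨a, ha, rfl⟩
  constructor
  · intro x y ax ay hx hy hxy hxax hyay hdx hdy
    ext z
    simp only [Set.mem_inter_iff, Set.mem_empty_iff_false, iff_false]
    rintro ⟨⟨hxz, hzax⟩, ⟨hyz, hzay⟩⟩
    -- y ≪ ax since y ≪ z ≪ ax
    have hyax : coneLL K y ax := by
      have : ax - z + (z - y) ∈ interior K :=
        hadd _ _ hzax (interior_subset hyz)
      simpa [coneLL, sub_add_sub_cancel] using this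
    have : y ∈ ordOO K x ax ∩ Uplus K F X := ⟨⟨hxy, hyax⟩, hy⟩
    rw [hdx] at this
    exact this
  · intro x y ax ay hx hy hyx haxx hayy hdx hdy
    ext z
    simp only [Set.mem_inter_iff, Set.mem_empty_iff_false, iff_false]
    rintro ⟨⟨haxz, hzx⟩, ⟨hayz, hzy⟩⟩
    -- ax ≪ y since ax ≪ z ≪ y
    have haxy : coneLL K ax y := by
      have : y - z + (z - ax) ∈ interior K :=
        hadd _ _ hzy (interior_subset haxz)
      simpa [coneLL, sub_add_sub_cancel] using this
    have : y ∈ ordOO K ax x ∩ Uminus K F X := ⟨⟨haxy, hyx⟩, hy⟩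
    rw [hdx] at this
    exact this
end

section
/- Proposition 3.3: Assume (H1) and (H2). Then both the upper ω-unstable set U_+ and the lower ω-unstable set U_− are Borel subsets of 𝔹. -/
open Set Topology Filter MeasureTheory Function

universe u

variable {E : Type u} [NormedAddCommGroup E] [NormedSpace ℝ E]
  [MeasurableSpace E] [BorelSpace E]

set_option linter.unusedSectionVars false
section P33Aux

namespace P33

variable {E : Type u} [NormedAddCommGroup E] [NormedSpace ℝ E]
variable {K : Set E} {F : E → E} {X : Set E}

lemma zero_memK (hK : IsConeOrder K) : (0:E) ∈ K := by
  have h := hK.2.2.2.2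
  have h0 : (0:E) ∈ K ∩ (-K) := by rw [h]; exact rfl
  exact h0.1

lemma coneLE_refl (hK : IsConeOrder K) (x : E) : coneLE K x x := by
  unfold coneLE; simpa using zero_memK hK

lemma coneLE_trans (hK : IsConeOrder K) {x y z : E} (h1 : coneLE K x y)
    (h2 : coneLE K y z) : coneLE K x z := by
  have h := hK.2.2.2.1 _ h2 _ h1
  unfold coneLE at *
  simpa [sub_add_sub_cancel] using h

lemma coneLE_antisymm (hK : IsConeOrder K) {x y : E} (h1 : coneLE K x y)
    (h2 : coneLE K y x) : x = y := by
  have hmem : y - x ∈ K ∩ (-K) := ⟨h1, by simp only [Set.mem_neg, neg_sub]; exact h2⟩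
  rw [hK.2.2.2.2] at hmem
  exact (sub_eq_zero.mp hmem).symm

lemma intK_add_K (hK : IsConeOrder K) {a b : E} (ha : a ∈ interior K) (hb : b ∈ K) :
    a + b ∈ interior K := by
  have hV : IsOpen ((fun z : E => z - b) ⁻¹' interior K) :=
    isOpen_interior.preimage (by fun_prop)
  have hVK : ((fun z : E => z - b) ⁻¹' interior K) ⊆ K := by
    intro z hz
    have h1 : z - b ∈ K := interior_subset hz
    have := hK.2.2.2.1 _ h1 _ hb
    simpa using this
  have hmem : a + b ∈ ((fun z : E => z - b) ⁻¹' interior K) := by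
    simp only [Set.mem_preimage, add_sub_cancel_right]; exact ha
  exact interior_maximal hVK hV hmem

lemma smul_intK (hK : IsConeOrder K) {a : E} {t : ℝ} (ht : 0 < t) (ha : a ∈ interior K) :
    t • a ∈ interior K := by
  have hV : IsOpen ((fun z : E => t⁻¹ • z) ⁻¹' interior K) :=
    isOpen_interior.preimage (by fun_prop)
  have hVK : ((fun z : E => t⁻¹ • z) ⁻¹' interior K) ⊆ K := by
    intro z hz
    have h1 : t⁻¹ • z ∈ K := interior_subset hz
    have := hK.2.2.1 _ h1 t ht
    rwa [smul_inv_smul₀ (ne_of_gt ht)] at this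
  have hmem : t • a ∈ ((fun z : E => t⁻¹ • z) ⁻¹' interior K) := by
    simp only [Set.mem_preimage, inv_smul_smul₀ (ne_of_gt ht)]; exact ha
  exact interior_maximal hVK hV hmem

lemma zero_not_intK [Nontrivial E] (hK : IsConeOrder K) : (0:E) ∉ interior K := by
  intro h0
  rcases Metric.mem_nhds_iff.mp (mem_interior_iff_mem_nhds.mp h0) with ⟨ε, hε, hball⟩
  obtain ⟨v, hv⟩ := exists_ne (0 : E)
  set w := (ε / (2 * ‖v‖)) • v with hw
  have hvnorm : 0 < ‖v‖ := norm_pos_iff.mpr hv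
  have hwnorm : ‖w‖ < ε := by
    rw [hw, norm_smul]
    simp only [Real.norm_eq_abs]
    rw [abs_of_pos (by positivity)]
    rw [div_mul_eq_mul_div, mul_comm]
    rw [div_lt_iff₀ (by positivity)]
    nlinarith
  have hw0 : w ≠ 0 := smul_ne_zero (by positivity) hv
  have hwK : w ∈ K := hball (by simpa [Metric.mem_ball, dist_zero_right] using hwnorm)
  have hwK' : -w ∈ K := hball (by simpa [Metric.mem_ball, dist_zero_right] using hwnorm)
  have : w ∈ K ∩ (-K) := ⟨hwK, by simpa [Set.mem_neg] using hwK'⟩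
  rw [hK.2.2.2.2] at this
  exact hw0 this

lemma coneLL_ne [Nontrivial E] (hK : IsConeOrder K) {x y : E} (h : coneLL K x y) :
    x ≠ y := by
  intro he
  rw [he] at h
  unfold coneLL at h
  simp only [sub_self] at h
  exact zero_not_intK hK h

lemma coneLL_le (h : coneLL K x y) : coneLE K x y := interior_subset h

lemma coneLL_lt [Nontrivial E] (hK : IsConeOrder K) {x y : E} (h : coneLL K x y) :
    coneLT K x y := ⟨coneLL_le h, coneLL_ne hK h⟩

lemma coneLT_of_lt_of_le (hK : IsConeOrder K) {x y z : E} (h1 : coneLT K x y)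
    (h2 : coneLE K y z) : coneLT K x z := by
  refine ⟨coneLE_trans hK h1.1 h2, ?_⟩
  intro he
  subst he
  exact h1.2 (coneLE_antisymm hK h1.1 h2)

lemma coneLL_of_le_of_ll (hK : IsConeOrder K) {x y z : E} (h1 : coneLE K x y)
    (h2 : coneLL K y z) : coneLL K x z := by
  unfold coneLL at *
  have := intK_add_K hK h2 h1
  rwa [sub_add_sub_cancel] at this

lemma coneLL_of_ll_of_le (hK : IsConeOrder K) {x y z : E} (h1 : coneLL K x y)
    (h2 : coneLE K y z) : coneLL K x z := by
  unfold coneLL at *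
  have := intK_add_K hK h1 h2
  rwa [add_comm, sub_add_sub_cancel] at this

lemma iterate_coneLE (hK : IsConeOrder K) (hFm : StronglyMonotoneMap K F)
    {x y : E} (h : coneLE K x y) (n : ℕ) : coneLE K (F^[n] x) (F^[n] y) := by
  induction n with
  | zero => simpa using h
  | succ n ih =>
    rw [Function.iterate_succ_apply', Function.iterate_succ_apply']
    by_cases he : F^[n] x = F^[n] y
    · rw [he]; exact coneLE_refl hK _
    · exact coneLL_le (hFm _ _ ⟨ih, he⟩)

lemma iterate_coneLL [Nontrivial E] (hK : IsConeOrder K) (hFm : StronglyMonotoneMap K F)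
    {x y : E} (h : coneLT K x y) {n : ℕ} (hn : 1 ≤ n) : coneLL K (F^[n] x) (F^[n] y) := by
  induction n with
  | zero => omega
  | succ n ih =>
    rcases Nat.eq_or_lt_of_le hn with he | hlt
    · have : n = 0 := by omega
      subst this
      simpa using hFm _ _ h
    · have h1 : 1 ≤ n := by omega
      rw [Function.iterate_succ_apply', Function.iterate_succ_apply']
      exact hFm _ _ (coneLL_lt hK (ih h1))

end P33

end P33Aux
namespace P33

variable {E : Type u} [NormedAddCommGroup E] [NormedSpace ℝ E]
variable {K : Set E} {F : E → E} {X : Set E}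

lemma mem_semiOrbit (F : E → E) (x : E) (n : ℕ) : F^[n] x ∈ semiOrbit F x := ⟨n, rfl⟩

lemma self_mem_semiOrbit (F : E → E) (x : E) : x ∈ semiOrbit F x := ⟨0, rfl⟩

lemma mem_omegaSet_iff {z x : E} :
    z ∈ omegaSet F x ↔ ∀ k : ℕ, ∀ ε > (0:ℝ), ∃ n, k ≤ n ∧ dist (F^[n] x) z < ε := by
  constructor
  · intro hz k ε hε
    have h1 : z ∈ closure (semiOrbit F (F^[k] x)) := Set.mem_iInter.mp hz k
    rcases Metric.mem_closure_iff.mp h1 ε hε with ⟨w, hw, hdw⟩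
    rcases hw with ⟨n, rfl⟩
    refine ⟨n + k, le_add_self, ?_⟩
    rw [Function.iterate_add_apply]
    simpa [dist_comm] using hdw
  · intro h
    apply Set.mem_iInter.mpr; intro k
    apply Metric.mem_closure_iff.mpr; intro ε hε
    rcases h k ε hε with ⟨n, hkn, hd⟩
    refine ⟨F^[n] x, ⟨n - k, ?_⟩, by simpa [dist_comm] using hd⟩
    rw [← Function.iterate_add_apply]
    congr 1
    omega

lemma exists_orbit_tendsto {z x : E} (hz : z ∈ omegaSet F x) :
    ∃ m : ℕ → ℕ, (∀ k, k ≤ m k) ∧ Tendsto (fun k => F^[m k] x) atTop (𝓝 z) := by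
  have h := mem_omegaSet_iff.mp hz
  choose m hm hd using fun k => h k (1/((k:ℝ)+1)) (by positivity)
  refine ⟨m, hm, ?_⟩
  rw [tendsto_iff_dist_tendsto_zero]
  apply squeeze_zero (fun k => dist_nonneg) (fun k => le_of_lt (hd k))
  exact tendsto_one_div_add_atTop_nhds_zero_nat

lemma mem_omegaSet_of_tendsto {z x : E} {τ : ℕ → ℕ} (hτ : ∀ j, j ≤ τ j)
    (h : Tendsto (fun j => F^[τ j] x) atTop (𝓝 z)) : z ∈ omegaSet F x := by
  apply Set.mem_iInter.mpr; intro k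
  apply mem_closure_of_tendsto h
  filter_upwards [eventually_ge_atTop k] with j hj
  refine ⟨τ j - k, ?_⟩
  rw [← Function.iterate_add_apply]
  congr 1
  have := hτ j
  omega

lemma orbitClosure_anti (F : E → E) (x : E) {k l : ℕ} (hkl : k ≤ l) :
    closure (semiOrbit F (F^[l] x)) ⊆ closure (semiOrbit F (F^[k] x)) := by
  apply closure_mono
  rintro w ⟨n, rfl⟩
  refine ⟨n + (l - k), ?_⟩
  rw [← Function.iterate_add_apply, ← Function.iterate_add_apply]
  congr 1
  omega

lemma omegaSet_subset_orbitClosure (F : E → E) (x : E) :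
    omegaSet F x ⊆ closure (semiOrbit F x) := by
  have h := Set.iInter_subset (fun k => closure (semiOrbit F (F^[k] x))) 0
  simpa [omegaSet] using h

lemma omegaSet_isClosed (F : E → E) (x : E) : IsClosed (omegaSet F x) :=
  isClosed_iInter (fun _ => isClosed_closure)

lemma omegaSet_isCompact {x : E} (h : IsCompact (closure (semiOrbit F x))) :
    IsCompact (omegaSet F x) :=
  h.of_isClosed_subset (omegaSet_isClosed F x) (omegaSet_subset_orbitClosure F x)

lemma omegaSet_nonempty {x : E} (h : IsCompact (closure (semiOrbit F x))) :
    (omegaSet F x).Nonempty := by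
  apply IsCompact.nonempty_iInter_of_sequence_nonempty_isCompact_isClosed
    (fun k => closure (semiOrbit F (F^[k] x)))
  · intro i; exact orbitClosure_anti F x (by omega)
  · intro i; exact ⟨F^[i] x, subset_closure (self_mem_semiOrbit F _)⟩
  · have : closure (semiOrbit F (F^[0] x)) = closure (semiOrbit F x) := by simp
    rw [this]; exact h
  · intro i; exact isClosed_closure

lemma F_mem_omegaSet (hFc : Continuous F) {z x : E} (hz : z ∈ omegaSet F x) :
    F z ∈ omegaSet F x := by
  obtain ⟨m, hm, hconv⟩ := exists_orbit_tendsto hz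
  apply mem_omegaSet_of_tendsto (τ := fun k => m k + 1) (fun j => Nat.le_succ_of_le (hm j))
  have : Tendsto (fun k => F (F^[m k] x)) atTop (𝓝 (F z)) :=
    (hFc.continuousAt.tendsto).comp hconv
  simpa [Function.iterate_succ_apply'] using this

lemma omegaSet_shift (F : E → E) (x : E) (s : ℕ) :
    omegaSet F (F^[s] x) = omegaSet F x := by
  unfold omegaSet
  apply Set.Subset.antisymm
  · apply Set.subset_iInter; intro k
    have h : (⋂ j : ℕ, closure (semiOrbit F (F^[j] (F^[s] x)))) ⊆
        closure (semiOrbit F (F^[k] (F^[s] x)))  := Set.iInter_subset _ k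
    refine h.trans ?_
    rw [← Function.iterate_add_apply]
    exact orbitClosure_anti F x (by omega)
  · apply Set.subset_iInter; intro k
    have h : (⋂ j : ℕ, closure (semiOrbit F (F^[j] x))) ⊆
        closure (semiOrbit F (F^[k + s] x)) := Set.iInter_subset _ (k + s)
    refine h.trans ?_
    rw [Function.iterate_add_apply]

end P33
namespace P33

variable {E : Type u} [NormedAddCommGroup E] [NormedSpace ℝ E]
variable {K : Set E} {F : E → E} {X : Set E}

lemma coneLE_of_tendsto (hK : IsConeOrder K) {b c : ℕ → E} {p q : E}
    (hb : Tendsto b atTop (𝓝 p)) (hc : Tendsto c atTop (𝓝 q))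
    (h : ∀ᶠ n in atTop, coneLE K (b n) (c n)) : coneLE K p q :=
  hK.1.mem_of_tendsto (hc.sub hb) (h.mono (fun _ hn => hn))

lemma ordered_seq_tendsto (hK : IsConeOrder K) {C : Set E} (hC : IsCompact C)
    {a : ℕ → E} (hmem : ∀ n, a n ∈ C)
    (hmono : ∀ k l, k ≤ l → coneLE K (a k) (a l)) :
    ∃ p ∈ C, Tendsto a atTop (𝓝 p) := by
  obtain ⟨p, hpC, φ, hφ, hconv⟩ := hC.tendsto_subseq hmem
  refine ⟨p, hpC, ?_⟩
  by_contra hcon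
  rw [Metric.tendsto_atTop] at hcon
  push_neg at hcon
  obtain ⟨ε, hε, hfreq⟩ := hcon
  have hfreq' : ∃ᶠ n in atTop, ε ≤ dist (a n) p := by
    rw [Filter.frequently_atTop]
    intro N
    obtain ⟨n, hn, hd⟩ := hfreq N
    exact ⟨n, hn, hd⟩
  obtain ⟨ψ, hψ, hψd⟩ := Filter.extraction_of_frequently_atTop hfreq'
  obtain ⟨q, hqC, ψ', hψ', hconv'⟩ := hC.tendsto_subseq (fun j => hmem (ψ j))
  have hqp : ε ≤ dist q p := by
    have hdist : Tendsto (fun i => dist ((a ∘ ψ ∘ ψ') i) p) atTop (𝓝 (dist q p)) :=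
      hconv'.dist tendsto_const_nhds
    exact le_of_tendsto_of_tendsto' tendsto_const_nhds hdist (fun i => hψd (ψ' i))
  have hqlep : coneLE K q p := by
    refine coneLE_of_tendsto hK hconv' tendsto_const_nhds (Eventually.of_forall ?_)
    intro i
    refine coneLE_of_tendsto hK tendsto_const_nhds hconv ?_
    filter_upwards [eventually_ge_atTop (ψ (ψ' i))] with j hj
    exact hmono _ _ (le_trans hj hφ.le_apply)
  have hpleq : coneLE K p q := by
    refine coneLE_of_tendsto hK hconv tendsto_const_nhds (Eventually.of_forall ?_)
    intro j
    refine coneLE_of_tendsto hK tendsto_const_nhds hconv' ?_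
    filter_upwards [eventually_ge_atTop (φ j)] with i hi
    exact hmono _ _ (le_trans hi (le_trans hψ'.le_apply hψ.le_apply))
  have hpq : p = q := coneLE_antisymm hK hpleq hqlep
  rw [hpq] at hqp
  simp at hqp
  linarith

lemma omega_exists_upper (hK : IsConeOrder K) (hFm : StronglyMonotoneMap K F)
    {y y' : E} (hle : coneLE K y y') (hc' : IsCompact (closure (semiOrbit F y')))
    {z : E} (hz : z ∈ omegaSet F y) :
    ∃ z' ∈ omegaSet F y', coneLE K z z' := by
  obtain ⟨m, hm, hconv⟩ := exists_orbit_tendsto hz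
  obtain ⟨z', _, φ, hφ, hconv'⟩ :=
    hc'.tendsto_subseq (fun k => subset_closure (mem_semiOrbit F y' (m k)))
  refine ⟨z', mem_omegaSet_of_tendsto (τ := fun j => m (φ j))
      (fun j => le_trans hφ.le_apply (hm (φ j))) hconv', ?_⟩
  refine coneLE_of_tendsto hK (hconv.comp hφ.tendsto_atTop) hconv'
    (Eventually.of_forall ?_)
  intro j
  exact iterate_coneLE hK hFm hle (m (φ j))

lemma omega_exists_lower (hK : IsConeOrder K) (hFm : StronglyMonotoneMap K F)
    {y y' : E} (hle : coneLE K y y') (hc : IsCompact (closure (semiOrbit F y)))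
    {z' : E} (hz' : z' ∈ omegaSet F y') :
    ∃ z ∈ omegaSet F y, coneLE K z z' := by
  obtain ⟨m, hm, hconv⟩ := exists_orbit_tendsto hz'
  obtain ⟨z, _, φ, hφ, hconv'⟩ :=
    hc.tendsto_subseq (fun k => subset_closure (mem_semiOrbit F y (m k)))
  refine ⟨z, mem_omegaSet_of_tendsto (τ := fun j => m (φ j))
      (fun j => le_trans hφ.le_apply (hm (φ j))) hconv', ?_⟩
  refine coneLE_of_tendsto hK hconv' (hconv.comp hφ.tendsto_atTop)
    (Eventually.of_forall ?_)
  intro j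
  exact iterate_coneLE hK hFm hle (m (φ j))

end P33
namespace P33

variable {E : Type u} [NormedAddCommGroup E] [NormedSpace ℝ E]
variable {K : Set E} {F : E → E} {X : Set E}

theorem omega_unordered [Nontrivial E] (hK : IsConeOrder K) (hFc : Continuous F)
    (hFm : StronglyMonotoneMap K F) {y : E}
    (hc : IsCompact (closure (semiOrbit F y))) {z z' : E}
    (hz : z ∈ omegaSet F y) (hz' : z' ∈ omegaSet F y) (hlt : coneLT K z z') : False := by
  have hw : coneLL K (F z) (F z') := hFm _ _ hlt
  have hwz : F z ∈ omegaSet F y := F_mem_omegaSet hFc hz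
  have hwz' : F z' ∈ omegaSet F y := F_mem_omegaSet hFc hz'
  obtain ⟨ε, hε, hball⟩ := Metric.isOpen_iff.mp isOpen_interior _ hw
  obtain ⟨s, -, hs⟩ := mem_omegaSet_iff.mp hwz 0 (ε/2) (by positivity)
  obtain ⟨tt, htts, htt⟩ := mem_omegaSet_iff.mp hwz' (s+1) (ε/2) (by positivity)
  set d := tt - s with hdd
  have hd : 1 ≤ d := by omega
  clear_value d
  set u := F^[s] y with hu
  have hukey : coneLL K u (F^[d] u) := by
    show F^[d] u - u ∈ interior K
    have hequ : F^[d] u = F^[tt] y := by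
      rw [hu, ← Function.iterate_add_apply]; congr 1; omega
    rw [hequ, hu]
    apply hball
    rw [Metric.mem_ball, dist_eq_norm]
    have heq : F^[tt] y - F^[s] y - (F z' - F z)
        = (F^[tt] y - F z') - (F^[s] y - F z) := by abel
    rw [heq]
    have h1 : ‖(F^[tt] y - F z') - (F^[s] y - F z)‖
        ≤ ‖F^[tt] y - F z'‖ + ‖F^[s] y - F z‖ := norm_sub_le _ _
    rw [dist_eq_norm] at hs htt
    linarith
  -- increasing chain
  set a : ℕ → E := fun k => F^[k*d] u with ha
  have hiter : ∀ k, F^[d] (a k) = a (k+1) := by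
    intro k
    rw [ha]
    simp only
    rw [← Function.iterate_add_apply]
    congr 1
    ring
  have hstep : ∀ k, coneLT K (a k) (a (k+1)) := by
    intro k
    induction k with
    | zero =>
      have e0 : a 0 = u := by simp [ha]
      have e1 : a 1 = F^[d] u := by simp [ha]
      rw [e0, e1]
      exact coneLL_lt hK hukey
    | succ k ih =>
      have h2 := iterate_coneLL hK hFm ih (n := d) hd
      rw [hiter k, hiter (k+1)] at h2
      exact coneLL_lt hK h2
  have hmono : ∀ k l, k ≤ l → coneLE K (a k) (a l) := by
    intro k l hkl
    induction l, hkl using Nat.le_induction with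
    | base => exact coneLE_refl hK _
    | succ l _ ih => exact coneLE_trans hK ih (hstep l).1
  have hamem : ∀ k, a k ∈ closure (semiOrbit F y) := by
    intro k
    apply subset_closure
    refine ⟨k*d + s, ?_⟩
    rw [ha, hu]
    simp only
    rw [← Function.iterate_add_apply]
  obtain ⟨ρ, hρC, hρconv⟩ := ordered_seq_tendsto hK hc hamem hmono
  have hsucc : Tendsto (fun k => a (k+1)) atTop (𝓝 ρ) :=
    hρconv.comp (tendsto_atTop_mono (fun k => Nat.le_succ k) tendsto_id)
  have hfix : F^[d] ρ = ρ := by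
    have h1 : Tendsto (fun k => F^[d] (a k)) atTop (𝓝 (F^[d] ρ)) :=
      ((hFc.iterate d).continuousAt.tendsto).comp hρconv
    have h2 : (fun k => F^[d] (a k)) = fun k => a (k+1) := funext hiter
    rw [h2] at h1
    exact tendsto_nhds_unique h1 hsucc
  have hper : ∀ c, F^[c*d] ρ = ρ := by
    intro c
    induction c with
    | zero => simp
    | succ c ih =>
      have : (c+1)*d = d + c*d := by ring
      rw [this, Function.iterate_add_apply, ih, hfix]
  -- every omega point is on the cycle of ρ
  have hP : ∀ w ∈ omegaSet F y, ∃ i, i < d ∧ w = F^[i] ρ := by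
    intro w hwmem
    obtain ⟨m, hm, hwconv⟩ := exists_orbit_tendsto hwmem
    set ii : ℕ → ℕ := fun k => (m (k + s) - s) % d with hii
    set qq : ℕ → ℕ := fun k => (m (k + s) - s) / d with hqq
    have hidlt : ∀ k, ii k < d := fun k => Nat.mod_lt _ (by omega)
    have hdecomp : ∀ k, F^[m (k+s)] y = F^[ii k] (a (qq k)) := by
      intro k
      rw [ha, hu]
      simp only
      rw [← Function.iterate_add_apply, ← Function.iterate_add_apply]
      congr 1
      have h1 : s ≤ m (k+s) := le_trans (by omega) (hm (k+s))
      have h2 := Nat.div_add_mod' (m (k+s) - s) d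
      simp only [hii, hqq]
      generalize hG : (m (k + s) - s) / d * d = G at h2 ⊢
      generalize hE : (m (k + s) - s) % d = I at h2 ⊢
      omega
    obtain ⟨i₀, hfib⟩ := Finite.exists_infinite_fiber (fun k => (⟨ii k, hidlt k⟩ : Fin d))
    rw [Set.infinite_coe_iff] at hfib
    have hfreq2 : ∃ᶠ k in atTop, ii k = i₀.val := by
      rw [Nat.frequently_atTop_iff_infinite]
      apply hfib.mono
      intro k hk
      simp only [Set.mem_preimage, Set.mem_singleton_iff] at hk
      simpa [Fin.ext_iff] using hk
    obtain ⟨ψ, hψ, hψP⟩ := Filter.extraction_of_frequently_atTop hfreq2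
    have hqtend : Tendsto (fun j => qq (ψ j)) atTop atTop := by
      rw [Filter.tendsto_atTop]
      intro A
      filter_upwards [eventually_ge_atTop (s + (A + 1) * d)] with j hj
      simp only [hqq]
      rw [Nat.le_div_iff_mul_le (by omega)]
      have h1 : ψ j + s ≤ m (ψ j + s) := hm (ψ j + s)
      have h2 : j ≤ ψ j := hψ.le_apply
      have h3 : A * d + d = (A+1) * d := by ring
      generalize hQ : (A+1) * d = Q at h3 hj
      generalize hP : A * d = P at h3 ⊢
      omega
    have hsub : Tendsto (fun j => a (qq (ψ j))) atTop (𝓝 ρ) := hρconv.comp hqtend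
    have h5 : Tendsto (fun j => F^[i₀.val] (a (qq (ψ j)))) atTop (𝓝 (F^[i₀.val] ρ)) :=
      ((hFc.iterate i₀.val).continuousAt.tendsto).comp hsub
    have h6 : Tendsto (fun j => F^[m (ψ j + s)] y) atTop (𝓝 w) :=
      hwconv.comp (tendsto_atTop_mono
        (fun j => le_trans hψ.le_apply (Nat.le_add_right _ s)) tendsto_id)
    have h7 : (fun j => F^[m (ψ j + s)] y) = fun j => F^[i₀.val] (a (qq (ψ j))) := by
      funext j
      rw [hdecomp (ψ j), hψP j]
    rw [h7] at h6
    exact ⟨i₀.val, i₀.isLt, tendsto_nhds_unique h6 h5⟩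
  obtain ⟨i, hi, rfl⟩ := hP z hz
  obtain ⟨i', hi', rfl⟩ := hP z' hz'
  set l := i' + d - i with hl
  have hl1 : 1 ≤ l := by omega
  have hzl : F^[l] (F^[i] ρ) = F^[i'] ρ := by
    rw [← Function.iterate_add_apply]
    have h8 : l + i = i' + 1*d := by rw [hl]; omega
    rw [h8, Function.iterate_add_apply, hper 1]
  have hchainstep : ∀ j, coneLT K (F^[j*l] (F^[i] ρ)) (F^[(j+1)*l] (F^[i] ρ)) := by
    intro j
    induction j with
    | zero =>
      simp only [Nat.zero_mul, Function.iterate_zero_apply, Nat.zero_add, Nat.one_mul]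
      rw [hzl]
      exact hlt
    | succ j ih =>
      have h2 := iterate_coneLL hK hFm ih (n := l) hl1
      have eA : F^[l] (F^[j*l] (F^[i] ρ)) = F^[(j+1)*l] (F^[i] ρ) := by
        rw [← Function.iterate_add_apply]; congr 1; ring
      have eB : F^[l] (F^[(j+1)*l] (F^[i] ρ)) = F^[(j+1+1)*l] (F^[i] ρ) := by
        rw [← Function.iterate_add_apply]; congr 1; ring
      rw [eA, eB] at h2
      exact coneLL_lt hK h2
  have hchain : ∀ j1 j2, j1 ≤ j2 →
      coneLE K (F^[j1*l] (F^[i] ρ)) (F^[j2*l] (F^[i] ρ)) := by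
    intro j1 j2 hj
    induction j2, hj using Nat.le_induction with
    | base => exact coneLE_refl hK _
    | succ j2 _ ih => exact coneLE_trans hK ih (hchainstep j2).1
  have hzzper : F^[d*l] (F^[i] ρ) = F^[i] ρ := by
    rw [← Function.iterate_add_apply]
    have h9 : d*l + i = i + l*d := by ring
    rw [h9, Function.iterate_add_apply, hper l]
  have hfinal1 : coneLT K (F^[i] ρ) (F^[1*l] (F^[i] ρ)) := by
    have := hchainstep 0
    simpa using this
  have hfinal2 : coneLE K (F^[1*l] (F^[i] ρ)) (F^[d*l] (F^[i] ρ)) := hchain 1 d hd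
  rw [hzzper] at hfinal2
  have hcontr := coneLT_of_lt_of_le hK hfinal1 hfinal2
  exact hcontr.2 rfl
end P33
namespace P33

variable {E : Type u} [NormedAddCommGroup E] [NormedSpace ℝ E]
variable {K : Set E} {F : E → E} {X : Set E}

/-- ray points above `x`. -/
noncomputable def rPt (e : E) (x : E) (m : ℕ) : E := x + (1/((m:ℝ)+1)) • e

/-- the limit set from above along the ray. -/
noncomputable def QSet (F : E → E) (e : E) (x : E) : Set E :=
  ⋂ M : ℕ, closure (⋃ m ∈ {m : ℕ | M ≤ m}, omegaSet F (rPt e x m))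

lemma tPos (m : ℕ) : (0:ℝ) < 1/((m:ℝ)+1) := by positivity

lemma tAnti {m m' : ℕ} (h : m ≤ m') : 1/((m':ℝ)+1) ≤ 1/((m:ℝ)+1) := by
  apply one_div_le_one_div_of_le (by positivity)
  have : (m:ℝ) ≤ (m':ℝ) := by exact_mod_cast h
  linarith

lemma coneLL_rPt (hK : IsConeOrder K) {e : E} (he : e ∈ interior K) (x : E) (m : ℕ) :
    coneLL K x (rPt e x m) := by
  show rPt e x m - x ∈ interior K
  rw [rPt, add_sub_cancel_left]
  exact smul_intK hK (tPos m) he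

lemma coneLE_rPt (hK : IsConeOrder K) {e : E} (he : e ∈ interior K) (x : E) (m : ℕ) :
    coneLE K x (rPt e x m) := coneLL_le (coneLL_rPt hK he x m)

lemma coneLT_rPt [Nontrivial E] (hK : IsConeOrder K) {e : E} (he : e ∈ interior K)
    (x : E) (m : ℕ) : coneLT K x (rPt e x m) := coneLL_lt hK (coneLL_rPt hK he x m)

lemma rPt_anti (hK : IsConeOrder K) {e : E} (he : e ∈ interior K) (x : E)
    {m m' : ℕ} (h : m ≤ m') : coneLE K (rPt e x m') (rPt e x m) := by
  show rPt e x m - rPt e x m' ∈ K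
  have heq : rPt e x m - rPt e x m' = (1/((m:ℝ)+1) - 1/((m':ℝ)+1)) • e := by
    rw [rPt, rPt, sub_smul]; abel
  rw [heq]
  rcases eq_or_lt_of_le (tAnti h) with hc | hc
  · rw [← hc, sub_self, zero_smul]; exact zero_memK hK
  · exact interior_subset (smul_intK hK (by linarith) he)

lemma orbit_cpt_of_mem (hK : IsConeOrder K) (hωc : OmegaCompactIntervals K F X)
    {w : E} (hw : w ∈ X) : IsCompact (closure (semiOrbit F w)) :=
  ((hωc w hw w hw (coneLE_refl hK w)).1 w ⟨coneLE_refl hK w, coneLE_refl hK w⟩).1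

lemma SSet_anti (F : E → E) (e : E) (x : E) {M1 M2 : ℕ} (h : M1 ≤ M2) :
    closure (⋃ m ∈ {m : ℕ | M2 ≤ m}, omegaSet F (rPt e x m)) ⊆
    closure (⋃ m ∈ {m : ℕ | M1 ≤ m}, omegaSet F (rPt e x m)) := by
  apply closure_mono
  apply Set.biUnion_subset_biUnion_left
  intro m hm
  exact le_trans h hm

lemma QSet_eq_tail (F : E → E) (e : E) (x : E) (M : ℕ) :
    QSet F e x = ⋂ j : ℕ, closure (⋃ m ∈ {m : ℕ | M + j ≤ m}, omegaSet F (rPt e x m)) := by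
  apply Set.Subset.antisymm
  · exact Set.subset_iInter (fun j => Set.iInter_subset _ (M + j))
  · apply Set.subset_iInter
    intro M'
    intro z hz
    have h1 := Set.mem_iInter.mp hz M'
    exact SSet_anti F e x (Nat.le_add_left M' M) h1

lemma QSet_isClosed (F : E → E) (e : E) (x : E) : IsClosed (QSet F e x) :=
  isClosed_iInter (fun _ => isClosed_closure)

section Main

variable (hK : IsConeOrder K) (hFc : Continuous F) (hFm : StronglyMonotoneMap K F)
  (hωc : OmegaCompactIntervals K F X) {e : E} (he : e ∈ interior K)
  {x : E} {M : ℕ} (hx : x ∈ X) (hrX : ∀ m, M ≤ m → rPt e x m ∈ X)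

include hK hFc hFm hωc he hx hrX

lemma master_compact :
    IsCompact (closure (⋃ w ∈ ordCC K x (rPt e x M), omegaSet F w)) :=
  (hωc x hx (rPt e x M) (hrX M le_rfl) (coneLE_rPt hK he x M)).2.1

lemma orbit_cpt_of_interval {w : E} (hw : w ∈ ordCC K x (rPt e x M)) :
    IsCompact (closure (semiOrbit F w)) :=
  ((hωc x hx (rPt e x M) (hrX M le_rfl) (coneLE_rPt hK he x M)).1 w hw).1

omit hK hFc hFm hωc he hx hrX

lemma rPt_mem_interval (hK : IsConeOrder K) {e : E} (he : e ∈ interior K)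
    {x : E} {M : ℕ} {m : ℕ} (hm : M ≤ m) :
    rPt e x m ∈ ordCC K x (rPt e x M) :=
  ⟨coneLE_rPt hK he x m, rPt_anti hK he x hm⟩

include hK hFc hFm hωc he hx hrX

lemma omega_sub_master {w : E} (hw : w ∈ ordCC K x (rPt e x M)) :
    omegaSet F w ⊆ closure (⋃ w ∈ ordCC K x (rPt e x M), omegaSet F w) :=
  (Set.subset_biUnion_of_mem hw).trans subset_closure

lemma SSet_sub_master {j : ℕ} :
    closure (⋃ m ∈ {m : ℕ | M + j ≤ m}, omegaSet F (rPt e x m)) ⊆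
    closure (⋃ w ∈ ordCC K x (rPt e x M), omegaSet F w) := by
  apply closure_minimal ?_ isClosed_closure
  intro z hz
  rcases Set.mem_iUnion₂.mp hz with ⟨m, hm, hzω⟩
  exact omega_sub_master hK hFc hFm hωc he hx hrX
    (rPt_mem_interval hK he (le_trans (Nat.le_add_right M j) hm)) hzω

lemma SSet_cpt {j : ℕ} :
    IsCompact (closure (⋃ m ∈ {m : ℕ | M + j ≤ m}, omegaSet F (rPt e x m))) :=
  (master_compact hK hFc hFm hωc he hx hrX).of_isClosed_subset isClosed_closure
    (SSet_sub_master hK hFc hFm hωc he hx hrX)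

lemma SSet_nonempty {j : ℕ} :
    (closure (⋃ m ∈ {m : ℕ | M + j ≤ m}, omegaSet F (rPt e x m))).Nonempty := by
  have hcpt : IsCompact (closure (semiOrbit F (rPt e x (M + j)))) :=
    orbit_cpt_of_interval hK hFc hFm hωc he hx hrX (rPt_mem_interval hK he (Nat.le_add_right M j))
  obtain ⟨w, hw⟩ := omegaSet_nonempty hcpt
  exact ⟨w, subset_closure (Set.mem_biUnion (by simp : M + j ∈ {m : ℕ | M + j ≤ m}) hw)⟩

lemma QSet_nonempty : (QSet F e x).Nonempty := by
  rw [QSet_eq_tail F e x M]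
  apply IsCompact.nonempty_iInter_of_sequence_nonempty_isCompact_isClosed
  · intro j
    exact SSet_anti F e x (by omega)
  · intro j
    exact SSet_nonempty hK hFc hFm hωc he hx hrX
  · exact SSet_cpt hK hFc hFm hωc he hx hrX
  · intro j
    exact isClosed_closure

lemma QSet_sub_master :
    QSet F e x ⊆ closure (⋃ w ∈ ordCC K x (rPt e x M), omegaSet F w) := by
  rw [QSet_eq_tail F e x M]
  exact (Set.iInter_subset _ 0).trans (SSet_sub_master hK hFc hFm hωc he hx hrX)

lemma QSet_subset_omegaPlus [Nontrivial E] :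
    QSet F e x ⊆ omegaPlus K F X x := by
  intro z hz
  apply Set.mem_iInter₂.mpr
  rintro u ⟨huX, hllxu⟩
  have htend : Tendsto (fun m : ℕ => u - x - (1/((m:ℝ)+1)) • e) atTop (𝓝 (u - x)) := by
    have h1 : Tendsto (fun m : ℕ => (1/((m:ℝ)+1)) • e) atTop (𝓝 ((0:ℝ) • e)) :=
      tendsto_one_div_add_atTop_nhds_zero_nat.smul_const e
    rw [zero_smul] at h1
    have h2 := (tendsto_const_nhds (x := u - x) (f := atTop (α := ℕ))).sub h1
    simpa using h2
  have hev : ∀ᶠ m : ℕ in atTop, u - x - (1/((m:ℝ)+1)) • e ∈ interior K :=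
    htend.eventually_mem (isOpen_interior.mem_nhds hllxu)
  obtain ⟨M', hM'⟩ := Filter.eventually_atTop.mp hev
  have h3 := Set.mem_iInter.mp hz (max M M')
  refine closure_mono ?_ h3
  apply Set.iUnion₂_subset
  intro m hm
  have hmM : M ≤ m := le_trans (le_max_left _ _) hm
  have hmM' : M' ≤ m := le_trans (le_max_right _ _) hm
  apply Set.subset_biUnion_of_mem
  refine ⟨hrX m hmM, coneLT_rPt hK he x m, ?_⟩
  show u - rPt e x m ∈ K
  have heq : u - rPt e x m = u - x - (1/((m:ℝ)+1)) • e := by rw [rPt]; abel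
  rw [heq]
  exact interior_subset (hM' m hmM')

omit hK hFc hFm hωc he hx hrX

lemma mem_QSet_of_subseq {e : E} {x : E} {M : ℕ} {b : ℕ → E} {β : E}
    (hb : ∀ k, b k ∈ omegaSet F (rPt e x (M + k))) {φ : ℕ → ℕ} (hφ : StrictMono φ)
    (hconv : Tendsto (fun i => b (φ i)) atTop (𝓝 β)) : β ∈ QSet F e x := by
  apply Set.mem_iInter.mpr
  intro M'
  apply mem_closure_of_tendsto hconv
  filter_upwards [eventually_ge_atTop M'] with i hi
  have hmem : (M + φ i) ∈ {m : ℕ | M' ≤ m} := by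
    have := hφ.le_apply (x := i)
    simp only [Set.mem_setOf_eq]
    omega
  exact Set.mem_biUnion hmem (hb (φ i))

include hK hFc hFm hωc he hx hrX

lemma sandwich [Nontrivial E] {z : E} (hz : z ∈ omegaPlus K F X x) :
    ∃ a ∈ omegaSet F x, ∃ b ∈ QSet F e x, coneLE K a z ∧ coneLE K z b := by
  have hxorb : IsCompact (closure (semiOrbit F x)) := orbit_cpt_of_mem hK hωc hx
  have hmaster := master_compact hK hFc hFm hωc he hx hrX
  have hP : ∀ k : ℕ, ∃ w a b, w ∈ closure (⋃ w ∈ ordCC K x (rPt e x M), omegaSet F w) ∧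
      dist z w < 1/((k:ℝ)+1) ∧ a ∈ omegaSet F x ∧ coneLE K a w ∧
      b ∈ omegaSet F (rPt e x (M + k)) ∧ coneLE K w b := by
    intro k
    have hu : rPt e x (M+k) ∈ {u ∈ X | coneLL K x u} :=
      ⟨hrX (M+k) (Nat.le_add_right M k), coneLL_rPt hK he x (M+k)⟩
    have h1 := Set.mem_iInter₂.mp hz (rPt e x (M+k)) hu
    obtain ⟨w, hwmem, hdzw⟩ := Metric.mem_closure_iff.mp h1 (1/((k:ℝ)+1)) (tPos k)
    obtain ⟨y, ⟨hyX, hxy, hyu⟩, hwy⟩ := Set.mem_iUnion₂.mp hwmem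
    have hyint : y ∈ ordCC K x (rPt e x M) :=
      ⟨hxy.1, coneLE_trans hK hyu (rPt_anti hK he x (Nat.le_add_right M k))⟩
    have hyorb : IsCompact (closure (semiOrbit F y)) :=
      orbit_cpt_of_interval hK hFc hFm hωc he hx hrX hyint
    have hrorb : IsCompact (closure (semiOrbit F (rPt e x (M+k)))) :=
      orbit_cpt_of_interval hK hFc hFm hωc he hx hrX
        (rPt_mem_interval hK he (Nat.le_add_right M k))
    obtain ⟨a, haω, halew⟩ := omega_exists_lower hK hFm hxy.1 hxorb hwy
    obtain ⟨b, hbω, hwleb⟩ := omega_exists_upper hK hFm hyu hrorb hwy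
    exact ⟨w, a, b, omega_sub_master hK hFc hFm hωc he hx hrX hyint hwy,
      hdzw, haω, halew, hbω, hwleb⟩
  choose w a b hwC hdzw haω halew hbω hwleb using hP
  have hwz : Tendsto w atTop (𝓝 z) := by
    rw [tendsto_iff_dist_tendsto_zero]
    apply squeeze_zero (fun k => dist_nonneg)
      (fun k => le_of_lt (by rw [dist_comm]; exact hdzw k))
    exact tendsto_one_div_add_atTop_nhds_zero_nat
  have hωxcpt : IsCompact (omegaSet F x) := omegaSet_isCompact hxorb
  obtain ⟨α, hαω, φ₁, hφ₁, hαconv⟩ := hωxcpt.tendsto_subseq (fun k => haω k)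
  have hbC : ∀ i, b (φ₁ i) ∈ closure (⋃ w ∈ ordCC K x (rPt e x M), omegaSet F w) :=
    fun i => omega_sub_master hK hFc hFm hωc he hx hrX
      (rPt_mem_interval hK he (Nat.le_add_right M (φ₁ i))) (hbω (φ₁ i))
  obtain ⟨β, hβC, φ₂, hφ₂, hβconv⟩ := hmaster.tendsto_subseq hbC
  have hβQ : β ∈ QSet F e x :=
    mem_QSet_of_subseq (fun k => hbω k) (hφ₁.comp hφ₂) hβconv
  refine ⟨α, hαω, β, hβQ, ?_, ?_⟩
  · exact coneLE_of_tendsto hK hαconv (hwz.comp hφ₁.tendsto_atTop)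
      (Eventually.of_forall (fun i => halew (φ₁ i)))
  · exact coneLE_of_tendsto hK (hwz.comp ((hφ₁.comp hφ₂).tendsto_atTop)) hβconv
      (Eventually.of_forall (fun i => hwleb (φ₁ (φ₂ i))))

lemma dominate {aa : E} (ha : aa ∈ omegaSet F x) :
    ∃ q ∈ QSet F e x, coneLE K aa q := by
  have hmaster := master_compact hK hFc hFm hωc he hx hrX
  have hP : ∀ k : ℕ, ∃ q, q ∈ omegaSet F (rPt e x (M + k)) ∧ coneLE K aa q := by
    intro k
    have hrorb : IsCompact (closure (semiOrbit F (rPt e x (M+k)))) :=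
      orbit_cpt_of_interval hK hFc hFm hωc he hx hrX
        (rPt_mem_interval hK he (Nat.le_add_right M k))
    obtain ⟨q, hqω, hq⟩ := omega_exists_upper hK hFm (coneLE_rPt hK he x (M+k)) hrorb ha
    exact ⟨q, hqω, hq⟩
  choose q hqω hqle using hP
  have hqC : ∀ k, q k ∈ closure (⋃ w ∈ ordCC K x (rPt e x M), omegaSet F w) :=
    fun k => omega_sub_master hK hFc hFm hωc he hx hrX
      (rPt_mem_interval hK he (Nat.le_add_right M k)) (hqω k)
  obtain ⟨β, hβC, φ, hφ, hβconv⟩ := hmaster.tendsto_subseq hqC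
  refine ⟨β, mem_QSet_of_subseq (fun k => hqω k) hφ hβconv, ?_⟩
  exact coneLE_of_tendsto hK tendsto_const_nhds hβconv
    (Eventually.of_forall (fun i => hqle (φ i)))

lemma key_iff [Nontrivial E] :
    omegaPlus K F X x = omegaSet F x ↔ QSet F e x = omegaSet F x := by
  have hxorb : IsCompact (closure (semiOrbit F x)) := orbit_cpt_of_mem hK hωc hx
  constructor
  · intro h
    apply Set.Subset.antisymm
    · rw [← h]
      exact QSet_subset_omegaPlus hK hFc hFm hωc he hx hrX
    · intro aa ha
      obtain ⟨qv, hqQ, hqle⟩ := dominate hK hFc hFm hωc he hx hrX ha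
      have hqω : qv ∈ omegaSet F x := by
        rw [← h]
        exact QSet_subset_omegaPlus hK hFc hFm hωc he hx hrX hqQ
      by_cases heq : aa = qv
      · rw [heq]; exact hqQ
      · exact absurd (omega_unordered hK hFc hFm hxorb ha hqω ⟨hqle, heq⟩)
          (fun hf => hf.elim)
  · intro h
    apply Set.Subset.antisymm
    · intro z hz
      obtain ⟨aa, haω, bb, hbQ, halez, hzleb⟩ := sandwich hK hFc hFm hωc he hx hrX hz
      have hbω : bb ∈ omegaSet F x := h ▸ hbQ
      have hab : coneLE K aa bb := coneLE_trans hK halez hzleb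
      by_cases heq : aa = bb
      · subst heq
        have hza : z = aa := coneLE_antisymm hK hzleb halez
        rw [hza]; exact haω
      · exact absurd (omega_unordered hK hFc hFm hxorb haω hbω ⟨hab, heq⟩)
          (fun hf => hf.elim)
    · rw [← h]
      exact QSet_subset_omegaPlus hK hFc hFm hωc he hx hrX

end Main

end P33
namespace P33
open scoped ENNReal

variable {E : Type u} [NormedAddCommGroup E] [NormedSpace ℝ E]
variable {K : Set E} {F : E → E} {X : Set E}

lemma subset_of_le {s : ℕ → Set E} (hanti : ∀ i, s (i+1) ⊆ s i) {j i : ℕ} (h : j ≤ i) :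
    s i ⊆ s j := by
  induction i, h using Nat.le_induction with
  | base => exact subset_rfl
  | succ i _ ih => exact (hanti i).trans ih

lemma infEdist_iInter_nested {s : ℕ → Set E} (hanti : ∀ i, s (i+1) ⊆ s i)
    (hne : ∀ i, (s i).Nonempty) (hcpt : ∀ i, IsCompact (s i))
    (hcl : ∀ i, IsClosed (s i)) (v : E) :
    EMetric.infEdist v (⋂ i, s i) = ⨆ i, EMetric.infEdist v (s i) := by
  apply le_antisymm
  · choose zf hzmem hzd using fun i => (hcpt i).exists_infEdist_eq_edist (hne i) v
    have hz0 : ∀ i, zf i ∈ s 0 := fun i => subset_of_le hanti (Nat.zero_le i) (hzmem i)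
    obtain ⟨zs, _, φ, hφ, hconv⟩ := (hcpt 0).tendsto_subseq hz0
    have hzsmem : zs ∈ ⋂ i, s i := by
      apply Set.mem_iInter.mpr
      intro j
      apply (hcl j).mem_of_tendsto hconv
      filter_upwards [eventually_ge_atTop j] with i hi
      exact subset_of_le hanti (le_trans hi hφ.le_apply) (hzmem (φ i))
    have hlim : Tendsto (fun i => edist v (zf (φ i))) atTop (𝓝 (edist v zs)) :=
      (continuous_const.edist continuous_id).continuousAt.tendsto.comp hconv
    have hbound : ∀ i, edist v (zf (φ i)) ≤ ⨆ i, EMetric.infEdist v (s i) := by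
      intro i
      rw [← hzd (φ i)]
      exact le_iSup (fun i => EMetric.infEdist v (s i)) (φ i)
    calc EMetric.infEdist v (⋂ i, s i) ≤ edist v zs :=
          EMetric.infEdist_le_edist_of_mem hzsmem
      _ ≤ ⨆ i, EMetric.infEdist v (s i) :=
          le_of_tendsto hlim (Eventually.of_forall hbound)
  · exact iSup_le (fun i => EMetric.infEdist_anti (Set.iInter_subset s i))

lemma infEdist_biUnion (v : E) (I : Set ℕ) (A : ℕ → Set E) :
    EMetric.infEdist v (⋃ m ∈ I, A m) = ⨅ m ∈ I, EMetric.infEdist v (A m) := by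
  apply le_antisymm
  · exact le_iInf₂ (fun m hm => EMetric.infEdist_anti (Set.subset_biUnion_of_mem hm))
  · apply EMetric.le_infEdist.mpr
    intro y hy
    rcases Set.mem_iUnion₂.mp hy with ⟨m, hm, hym⟩
    exact le_trans (iInf₂_le m hm) (EMetric.infEdist_le_edist_of_mem hym)

lemma infEdist_semiOrbit (v : E) (F : E → E) (w : E) :
    EMetric.infEdist v (semiOrbit F w) = ⨅ n : ℕ, edist v (F^[n] w) := by
  apply le_antisymm
  · exact le_iInf (fun n => EMetric.infEdist_le_edist_of_mem ⟨n, rfl⟩)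
  · apply EMetric.le_infEdist.mpr
    rintro y ⟨n, rfl⟩
    exact iInf_le (fun n => edist v (F^[n] w)) n

/-- explicit countable formula for distance to the omega set -/
noncomputable def gDist (F : E → E) (v : E) (y : E) : ℝ≥0∞ :=
  ⨆ k : ℕ, ⨅ n : ℕ, edist v (F^[n+k] y)

lemma gDist_eq {v y : E} (hcpt : IsCompact (closure (semiOrbit F y))) :
    EMetric.infEdist v (omegaSet F y) = gDist F v y := by
  have h0 : ∀ k, closure (semiOrbit F (F^[k] y)) ⊆ closure (semiOrbit F y) := by
    intro k
    have := orbitClosure_anti F y (Nat.zero_le k)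
    simpa using this
  have h1 : EMetric.infEdist v (omegaSet F y)
      = ⨆ k, EMetric.infEdist v (closure (semiOrbit F (F^[k] y))) := by
    apply infEdist_iInter_nested
    · intro i; exact orbitClosure_anti F y (Nat.le_succ i)
    · intro i; exact ⟨F^[i] y, subset_closure (self_mem_semiOrbit F _)⟩
    · intro i; exact hcpt.of_isClosed_subset isClosed_closure (h0 i)
    · intro i; exact isClosed_closure
  rw [h1]
  apply iSup_congr
  intro k
  have hcl : EMetric.infEdist v (closure (semiOrbit F (F^[k] y)))
      = EMetric.infEdist v (semiOrbit F (F^[k] y)) := EMetric.infEdist_closure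
  rw [hcl, infEdist_semiOrbit]
  apply iInf_congr
  intro n
  rw [← Function.iterate_add_apply]

/-- explicit countable formula for distance to `QSet` -/
noncomputable def qDist (F : E → E) (e : E) (v : E) (x : E) : ℝ≥0∞ :=
  ⨆ M : ℕ, ⨅ m : ℕ, ⨅ (_ : M ≤ m), gDist F v (rPt e x m)

lemma qDist_mono (F : E → E) (e : E) (v : E) (x : E) {M1 M2 : ℕ} (h : M1 ≤ M2) :
    (⨅ m : ℕ, ⨅ (_ : M1 ≤ m), gDist F v (rPt e x m))
    ≤ ⨅ m : ℕ, ⨅ (_ : M2 ≤ m), gDist F v (rPt e x m) := by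
  apply le_iInf₂
  intro m hm
  exact iInf₂_le m (le_trans h hm)

lemma qDist_eq (hK : IsConeOrder K) (hFc : Continuous F) (hFm : StronglyMonotoneMap K F)
    (hωc : OmegaCompactIntervals K F X) {e : E} (he : e ∈ interior K)
    {x : E} {M : ℕ} (hx : x ∈ X) (hrX : ∀ m, M ≤ m → rPt e x m ∈ X) (v : E) :
    EMetric.infEdist v (QSet F e x) = qDist F e v x := by
  rw [QSet_eq_tail F e x M]
  have h1 : EMetric.infEdist v (⋂ j : ℕ, closure (⋃ m ∈ {m : ℕ | M + j ≤ m},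
      omegaSet F (rPt e x m)))
      = ⨆ j : ℕ, EMetric.infEdist v (closure (⋃ m ∈ {m : ℕ | M + j ≤ m},
        omegaSet F (rPt e x m))) := by
    apply infEdist_iInter_nested
    · intro i; exact SSet_anti F e x (by omega)
    · intro i; exact SSet_nonempty hK hFc hFm hωc he hx hrX
    · intro i; exact SSet_cpt hK hFc hFm hωc he hx hrX
    · intro i; exact isClosed_closure
  rw [h1]
  have h2 : ∀ j : ℕ, EMetric.infEdist v (closure (⋃ m ∈ {m : ℕ | M + j ≤ m},
      omegaSet F (rPt e x m)))
      = ⨅ m : ℕ, ⨅ (_ : M + j ≤ m), gDist F v (rPt e x m) := by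
    intro j
    have hcl : EMetric.infEdist v (closure (⋃ m ∈ {m : ℕ | M + j ≤ m}, omegaSet F (rPt e x m)))
        = EMetric.infEdist v (⋃ m ∈ {m : ℕ | M + j ≤ m}, omegaSet F (rPt e x m)) :=
      EMetric.infEdist_closure
    rw [hcl, infEdist_biUnion]
    apply iInf_congr
    intro m
    refine iInf_congr_Prop Iff.rfl (fun hm => ?_)
    have hm' : M ≤ m := le_trans (Nat.le_add_right M j) hm
    exact gDist_eq (orbit_cpt_of_interval hK hFc hFm hωc he hx hrX
      (rPt_mem_interval hK he hm'))
  have h3 : (⨆ j : ℕ, EMetric.infEdist v (closure (⋃ m ∈ {m : ℕ | M + j ≤ m},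
      omegaSet F (rPt e x m))))
      = ⨆ j : ℕ, ⨅ m : ℕ, ⨅ (_ : M + j ≤ m), gDist F v (rPt e x m) :=
    iSup_congr h2
  rw [h3]
  apply le_antisymm
  · apply iSup_le
    intro j
    exact le_iSup (fun M' => ⨅ m : ℕ, ⨅ (_ : M' ≤ m), gDist F v (rPt e x m)) (M + j)
  · apply iSup_le
    intro M'
    refine le_trans (qDist_mono F e v x (Nat.le_add_left M' M)) ?_
    exact le_iSup (fun j => ⨅ m : ℕ, ⨅ (_ : M + j ≤ m), gDist F v (rPt e x m)) M'

end P33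
namespace P33
open scoped ENNReal

variable {E : Type u} [NormedAddCommGroup E] [NormedSpace ℝ E]
variable {K : Set E} {F : E → E} {X : Set E}

lemma closed_subset_of_infEdist {A B : Set E} (hB : IsClosed B) {un : ℕ → E}
    (hu : DenseRange un)
    (h : ∀ n, EMetric.infEdist (un n) A = EMetric.infEdist (un n) B) : A ⊆ B := by
  intro a ha
  have haimg : a ∈ closure (Set.range un) := hu a
  obtain ⟨yy, hymem, hytend⟩ := mem_closure_iff_seq_limit.mp haimg
  choose nn hnn using hymem
  have hbound : ∀ j, EMetric.infEdist a B ≤ edist (yy j) a + edist a (yy j) := by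
    intro j
    calc EMetric.infEdist a B
        ≤ EMetric.infEdist (yy j) B + edist a (yy j) :=
          EMetric.infEdist_le_infEdist_add_edist
      _ = EMetric.infEdist (yy j) A + edist a (yy j) := by
          rw [← hnn j, h (nn j)]
      _ ≤ edist (yy j) a + edist a (yy j) :=
          add_le_add_left (EMetric.infEdist_le_edist_of_mem ha) _
  have hlim : Tendsto (fun j => edist (yy j) a + edist a (yy j)) atTop (𝓝 0) := by
    have h1 : Tendsto (fun j => edist (yy j) a) atTop (𝓝 (edist a a)) :=
      hytend.edist tendsto_const_nhds
    have h2 : Tendsto (fun j => edist a (yy j)) atTop (𝓝 (edist a a)) :=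
      tendsto_const_nhds.edist hytend
    rw [edist_self] at h1 h2
    simpa using h1.add h2
  have hzero : EMetric.infEdist a B ≤ 0 := ge_of_tendsto' hlim hbound
  have : a ∈ closure B := EMetric.mem_closure_iff_infEdist_zero.mpr
    (le_antisymm hzero zero_le)
  rwa [hB.closure_eq] at this

lemma closed_eq_of_infEdist {A B : Set E} (hA : IsClosed A) (hB : IsClosed B)
    {un : ℕ → E} (hu : DenseRange un)
    (h : ∀ n, EMetric.infEdist (un n) A = EMetric.infEdist (un n) B) : A = B :=
  Set.Subset.antisymm (closed_subset_of_infEdist hB hu h)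
    (closed_subset_of_infEdist hA hu (fun n => (h n).symm))

variable [MeasurableSpace E] [BorelSpace E]

lemma gDist_measurable (hFc : Continuous F) (v : E) : Measurable (gDist F v) :=
  Measurable.iSup (fun k => Measurable.iInf (fun n =>
    (continuous_const.edist (hFc.iterate (n+k))).measurable))

lemma qDist_measurable (hFc : Continuous F) (e v : E) : Measurable (qDist F e v) :=
  Measurable.iSup (fun M => Measurable.iInf (fun m => Measurable.iInf (fun _ =>
    ((gDist_measurable hFc v).comp
      ((continuous_id.add continuous_const).measurable)))))

theorem measurable_Uplus [Nontrivial E] [TopologicalSpace.SeparableSpace E]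
    (hK : IsConeOrder K) (hKint : (interior K).Nonempty) (hFc : Continuous F)
    (hFm : StronglyMonotoneMap K F) (hXopen : IsOpen X)
    (hωc : OmegaCompactIntervals K F X) : MeasurableSet (Uplus K F X) := by
  obtain ⟨e, he⟩ := hKint
  have hne : Nonempty E := ⟨0⟩
  set un := TopologicalSpace.denseSeq E with hun
  have hu : DenseRange un := TopologicalSpace.denseRange_denseSeq E
  set XM : ℕ → Set E := fun M => X ∩ ⋂ m ∈ {m : ℕ | M ≤ m},
    (fun x => rPt e x m) ⁻¹' X with hXM
  have hXMmeas : ∀ M, MeasurableSet (XM M) := by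
    intro M
    apply hXopen.measurableSet.inter
    apply MeasurableSet.biInter (Set.to_countable _)
    intro m _
    have hcont : Continuous (fun x : E => rPt e x m) := by
      unfold rPt
      exact continuous_id.add continuous_const
    exact (hXopen.preimage hcont).measurableSet
  set D : Set E := ⋃ n : ℕ, {x | qDist F e (un n) x = gDist F (un n) x}ᶜ with hD
  have hDmeas : MeasurableSet D := by
    apply MeasurableSet.iUnion
    intro n
    apply MeasurableSet.compl
    have heqset : {x | qDist F e (un n) x = gDist F (un n) x}
        = {x | qDist F e (un n) x ≤ gDist F (un n) x}
          ∩ {x | gDist F (un n) x ≤ qDist F e (un n) x} := by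
      ext w
      simp only [Set.mem_setOf_eq, Set.mem_inter_iff]
      constructor
      · intro hw; exact ⟨le_of_eq hw, le_of_eq hw.symm⟩
      · intro hw; exact le_antisymm hw.1 hw.2
    rw [heqset]
    exact (measurableSet_le (qDist_measurable hFc e (un n)) (gDist_measurable hFc (un n))).inter
      (measurableSet_le (gDist_measurable hFc (un n)) (qDist_measurable hFc e (un n)))
  have hXMprop : ∀ M x, x ∈ XM M → (x ∈ X ∧ ∀ m, M ≤ m → rPt e x m ∈ X) := by
    intro M x hx
    refine ⟨hx.1, fun m hm => ?_⟩
    have h2 := hx.2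
    rw [Set.mem_iInter₂] at h2
    exact h2 m hm
  have hset : Uplus K F X = ⋃ M : ℕ, XM M ∩ D := by
    ext x
    constructor
    · rintro ⟨hxX, hneq⟩
      obtain ⟨ρ, hρpos, hball⟩ := Metric.isOpen_iff.mp hXopen x hxX
      obtain ⟨M, hM⟩ := exists_nat_gt (‖e‖ / ρ)
      have hrX : ∀ m, M ≤ m → rPt e x m ∈ X := by
        intro m hm
        apply hball
        rw [Metric.mem_ball, rPt]
        have hdist : dist (x + (1/((m:ℝ)+1)) • e) x = ‖(1/((m:ℝ)+1)) • e‖ := by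
          rw [dist_eq_norm]
          congr 1
          abel
        rw [hdist, norm_smul, Real.norm_eq_abs, abs_of_pos (tPos m)]
        have hm1 : (M:ℝ) ≤ (m:ℝ) := by exact_mod_cast hm
        have h2 : ‖e‖ / ρ < (m:ℝ)+1 := by linarith
        have h3 : ‖e‖ < ρ * ((m:ℝ)+1) := by
          rw [div_lt_iff₀ hρpos] at h2
          linarith [h2]
        have h4 : (0:ℝ) < (m:ℝ)+1 := by positivity
        rw [div_mul_eq_mul_div, one_mul, div_lt_iff₀ h4]
        linarith
      refine Set.mem_iUnion.mpr ⟨M, ⟨⟨hxX, ?_⟩, ?_⟩⟩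
      · rw [Set.mem_iInter₂]
        intro m hm
        exact hrX m hm
      · have hQne : QSet F e x ≠ omegaSet F x := fun hQ =>
          hneq ((key_iff hK hFc hFm hωc he hxX hrX).mpr hQ)
        rw [hD]
        by_contra hcon
        simp only [Set.mem_iUnion, Set.mem_compl_iff, Set.mem_setOf_eq, not_exists,
          not_not] at hcon
        apply hQne
        apply closed_eq_of_infEdist (QSet_isClosed F e x) (omegaSet_isClosed F x) hu
        intro n
        rw [qDist_eq hK hFc hFm hωc he hxX hrX (un n), hcon n,
          ← gDist_eq (orbit_cpt_of_mem hK hωc hxX)]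
    · intro hx
      obtain ⟨M, hmem⟩ := Set.mem_iUnion.mp hx
      obtain ⟨hxX, hrX⟩ := hXMprop M x hmem.1
      refine ⟨hxX, ?_⟩
      intro heqω
      have hQ : QSet F e x = omegaSet F x := (key_iff hK hFc hFm hωc he hxX hrX).mp heqω
      have hd := hmem.2
      rw [hD] at hd
      simp only [Set.mem_iUnion, Set.mem_compl_iff, Set.mem_setOf_eq] at hd
      obtain ⟨n, hn⟩ := hd
      apply hn
      rw [← qDist_eq hK hFc hFm hωc he hxX hrX (un n),
        ← gDist_eq (orbit_cpt_of_mem hK hωc hxX), hQ]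
  rw [hset]
  exact MeasurableSet.iUnion (fun M => (hXMmeas M).inter hDmeas)

end P33
namespace P33

variable {E : Type u} [NormedAddCommGroup E] [NormedSpace ℝ E]
variable {K : Set E} {F : E → E} {X : Set E}

lemma negK_isConeOrder (hK : IsConeOrder K) : IsConeOrder (-K) := by
  obtain ⟨hcl, hcv, hsm, hadd, hpt⟩ := hK
  refine ⟨hcl.neg, hcv.neg, ?_, ?_, ?_⟩
  · intro x hx α hα
    rw [Set.mem_neg] at *
    rw [← smul_neg]
    exact hsm _ hx α hα
  · intro x hx y hy
    rw [Set.mem_neg] at *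
    rw [neg_add]
    exact hadd _ hx _ hy
  · rw [neg_neg, Set.inter_comm]
    exact hpt

lemma mem_interior_negK {a : E} : a ∈ interior (-K : Set E) ↔ -a ∈ interior K := by
  have h : (-K : Set E) = (Homeomorph.neg E) ⁻¹' K := by
    ext w
    simp [Set.mem_neg]
  rw [h, ← Homeomorph.preimage_interior]
  simp

lemma coneLL_neg {a b : E} : coneLL (-K) a b ↔ coneLL K b a := by
  unfold coneLL
  rw [mem_interior_negK, neg_sub]

lemma coneLE_neg {a b : E} : coneLE (-K) a b ↔ coneLE K b a := by
  unfold coneLE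
  rw [Set.mem_neg, neg_sub]

lemma coneLT_neg {a b : E} : coneLT (-K) a b ↔ coneLT K b a := by
  unfold coneLT
  rw [coneLE_neg]
  constructor
  · rintro ⟨h1, h2⟩; exact ⟨h1, fun hy => h2 hy.symm⟩
  · rintro ⟨h1, h2⟩; exact ⟨h1, fun hy => h2 hy.symm⟩

lemma negK_stronglyMonotone (hFm : StronglyMonotoneMap K F) :
    StronglyMonotoneMap (-K) F := by
  intro x y hxy
  rw [coneLL_neg]
  exact hFm y x (coneLT_neg.mp hxy)

lemma ordCC_neg (a b : E) : ordCC (-K) a b = ordCC K b a := by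
  ext z
  unfold ordCC
  rw [Set.mem_setOf_eq, Set.mem_setOf_eq, coneLE_neg, coneLE_neg, and_comm]

lemma negK_omegaCompact (hωc : OmegaCompactIntervals K F X) :
    OmegaCompactIntervals (-K) F X := by
  intro a ha b hb hab
  rw [ordCC_neg]
  exact hωc b hb a ha (coneLE_neg.mp hab)

lemma omegaPlus_negK (F : E → E) (X : Set E) (x : E) :
    omegaPlus (-K) F X x = omegaMinus K F X x := by
  unfold omegaPlus omegaMinus
  have hS : {u | u ∈ X ∧ coneLL (-K) x u} = {u | u ∈ X ∧ coneLL K u x} := by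
    ext u
    rw [Set.mem_setOf_eq, Set.mem_setOf_eq, coneLL_neg]
  rw [hS]
  apply Set.iInter_congr
  intro u
  apply Set.iInter_congr
  intro hu
  congr 1
  have hT : {y | y ∈ X ∧ (coneLT (-K) x y ∧ coneLE (-K) y u)}
      = {y | y ∈ X ∧ (coneLT K y x ∧ coneLE K u y)} := by
    ext yy
    rw [Set.mem_setOf_eq, Set.mem_setOf_eq, coneLT_neg, coneLE_neg]
  rw [hT]

lemma Uminus_eq_Uplus_negK (K : Set E) (F : E → E) (X : Set E) :
    Uminus K F X = Uplus (-K) F X := by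
  unfold Uplus Uminus
  ext x
  rw [Set.mem_setOf_eq, Set.mem_setOf_eq, omegaPlus_negK]

end P33
/-- Proposition 3.3: under (H1) and (H2), both `U₊` and `U₋` are Borel subsets of `E`. -/
theorem prop33 [CompleteSpace E] [TopologicalSpace.SeparableSpace E]
    (K : Set E) (F : E → E) (X : Set E)
    -- (H1)
    (hK : IsConeOrder K) (hKint : (interior K).Nonempty)
    (hFc : Continuous F) (hFm : StronglyMonotoneMap K F)
    -- (H2)
    (hXopen : IsOpen X) (hXoc : OrderConvexSet K X) (hXinv : Set.MapsTo F X X)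
    (hωc : OmegaCompactIntervals K F X) :
    MeasurableSet (Uplus K F X) ∧ MeasurableSet (Uminus K F X) := by
  rcases subsingleton_or_nontrivial E with hsub | hnt
  · exact ⟨Subsingleton.measurableSet, Subsingleton.measurableSet⟩
  · obtain ⟨e, he⟩ := hKint
    constructor
    · exact P33.measurable_Uplus hK ⟨e, he⟩ hFc hFm hXopen hωc
    · rw [P33.Uminus_eq_Uplus_negK]
      exact P33.measurable_Uplus (P33.negK_isConeOrder hK)
        ⟨-e, P33.mem_interior_negK.mpr (by rwa [neg_neg])⟩ hFc
        (P33.negK_stronglyMonotone hFm) hXopen (P33.negK_omegaCompact hωc)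
end

section
/- Claim in the proof of Theorem A: Assume (H1) and (H2). Fix any vector v ≫ 0 and let L_v be any straight line parallel to v (i.e., L_v = {y + t·v : t ∈ ℝ} for some y ∈ 𝔹). Then U_+ ∩ L_v is at most countable, and likewise U_− ∩ L_v is at most countable. -/
open Set Topology Filter MeasureTheory Function

universe u

variable {E : Type u} [NormedAddCommGroup E] [NormedSpace ℝ E]
  [MeasurableSpace E] [BorelSpace E]

set_option linter.unusedSectionVars false
set_option linter.unusedVariables false

namespace ULC

variable {E : Type u} [NormedAddCommGroup E] [NormedSpace ℝ E]
  [MeasurableSpace E] [BorelSpace E]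

variable {K : Set E} {F : E → E} {X : Set E}

lemma zero_mem (hK : IsConeOrder K) : (0:E) ∈ K := by
  have h : (0:E) ∈ ({0} : Set E) := rfl
  rw [← hK.2.2.2.2] at h; exact h.1

lemma leRefl (hK : IsConeOrder K) (x : E) : coneLE K x x := by
  unfold coneLE; simpa using zero_mem hK

lemma leTrans (hK : IsConeOrder K) {a b c : E} (h1 : coneLE K a b) (h2 : coneLE K b c) :
    coneLE K a c := by
  have h := hK.2.2.2.1 _ h2 _ h1
  unfold coneLE at *
  convert h using 1; abel

lemma leAntisym (hK : IsConeOrder K) {a b : E} (h1 : coneLE K a b) (h2 : coneLE K b a) :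
    a = b := by
  have h : b - a ∈ K ∩ (-K) := by
    refine ⟨h1, ?_⟩
    simpa [Set.mem_neg, neg_sub, coneLE] using h2
  rw [hK.2.2.2.2] at h
  have : b - a = 0 := h
  have := sub_eq_zero.mp this
  exact this.symm

lemma ltTrans_le_lt (hK : IsConeOrder K) {a b c : E} (h1 : coneLE K a b) (h2 : coneLT K b c) :
    coneLT K a c := by
  refine ⟨leTrans hK h1 h2.1, ?_⟩
  rintro rfl
  exact h2.2 (leAntisym hK h2.1 h1)

lemma ltTrans_lt_le (hK : IsConeOrder K) {a b c : E} (h1 : coneLT K a b) (h2 : coneLE K b c) :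
    coneLT K a c := by
  refine ⟨leTrans hK h1.1 h2, ?_⟩
  rintro rfl
  exact h1.2 (leAntisym hK h1.1 h2)

lemma intK_add_K (hK : IsConeOrder K) {a b : E} (ha : a ∈ interior K) (hb : b ∈ K) :
    a + b ∈ interior K := by
  have hopen : IsOpen ((fun w => w + b) '' interior K) :=
    (isOpenMap_add_right b) _ isOpen_interior
  have hsub : (fun w => w + b) '' interior K ⊆ K := by
    rintro _ ⟨w, hw, rfl⟩
    exact hK.2.2.2.1 _ (interior_subset hw) _ hb
  exact interior_maximal hsub hopen ⟨a, ha, rfl⟩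

lemma llTrans_le_ll (hK : IsConeOrder K) {a b c : E} (h1 : coneLE K a b) (h2 : coneLL K b c) :
    coneLL K a c := by
  have h := intK_add_K hK h2 h1
  unfold coneLL at *
  convert h using 1; abel

lemma llTrans_ll_le (hK : IsConeOrder K) {a b c : E} (h1 : coneLL K a b) (h2 : coneLE K b c) :
    coneLL K a c := by
  have h := intK_add_K hK h1 h2
  unfold coneLL at *
  convert h using 1; abel

lemma ll_to_le {a b : E} (h : coneLL K a b) : coneLE K a b := interior_subset h

lemma ll_to_lt (h0 : (0:E) ∉ interior K) {a b : E} (h : coneLL K a b) : coneLT K a b := by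
  refine ⟨interior_subset h, ?_⟩
  rintro rfl
  exact h0 (by simpa [coneLL] using h)

lemma smul_intK (hK : IsConeOrder K) {c : ℝ} (hc : 0 < c) {w : E} (hw : w ∈ interior K) :
    c • w ∈ interior K := by
  have hopen : IsOpen ((fun z : E => c • z) '' interior K) := by
    have : IsOpenMap (fun z : E => c • z) := (Homeomorph.smulOfNeZero c hc.ne').isOpenMap
    exact this _ isOpen_interior
  have hsub : (fun z : E => c • z) '' interior K ⊆ K := by
    rintro _ ⟨z, hz, rfl⟩
    exact hK.2.2.1 _ (interior_subset hz) _ hc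
  exact interior_maximal hsub hopen ⟨w, hw, rfl⟩

lemma smul_nonneg_memK (hK : IsConeOrder K) {c : ℝ} (hc : 0 ≤ c) {w : E} (hw : w ∈ K) :
    c • w ∈ K := by
  rcases eq_or_lt_of_le hc with rfl|h
  · simpa using zero_mem hK
  · exact hK.2.2.1 _ hw _ h

lemma line_sub {y v : E} {t s : ℝ} : (y + s • v) - (y + t • v) = (s - t) • v := by
  rw [sub_smul]; abel

lemma line_mono (hK : IsConeOrder K) {y v : E} (hv : coneLL K 0 v) {t s : ℝ} (h : t < s) :
    coneLL K (y + t • v) (y + s • v) := by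
  have hv' : v ∈ interior K := by simpa [coneLL] using hv
  unfold coneLL
  rw [line_sub]
  exact smul_intK hK (sub_pos.2 h) hv'

lemma line_le (hK : IsConeOrder K) {y v : E} (hv : coneLL K 0 v) {t s : ℝ} (h : t ≤ s) :
    coneLE K (y + t • v) (y + s • v) := by
  have hv' : v ∈ interior K := by simpa [coneLL] using hv
  unfold coneLE
  rw [line_sub]
  exact smul_nonneg_memK hK (sub_nonneg.2 h) (interior_subset hv')

lemma absorb (hK : IsConeOrder K) {a b : E} (h : coneLL K a b) :
    ∃ ρ > 0, ∀ p q : E, dist p a < ρ → dist q b < ρ → coneLE K p q := by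
  obtain ⟨ε, hε, hball⟩ := Metric.isOpen_iff.mp isOpen_interior _ h
  refine ⟨ε/2, by positivity, fun p q hp hq => ?_⟩
  have hmem : q - p ∈ Metric.ball (b - a) ε := by
    rw [Metric.mem_ball, dist_eq_norm]
    have he : q - p - (b - a) = (q - b) - (p - a) := by abel
    rw [he]
    calc ‖(q - b) - (p - a)‖ ≤ ‖q - b‖ + ‖p - a‖ := norm_sub_le _ _
      _ < ε/2 + ε/2 := by
          rw [dist_eq_norm] at hp hq
          exact add_lt_add hq hp
      _ = ε := by ring
  exact interior_subset (hball hmem)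

lemma le_cases (h : coneLE K a b) : coneLT K a b ∨ a = b := by
  by_cases hab : a = b
  · exact Or.inr hab
  · exact Or.inl ⟨h, hab⟩

lemma mono_le (hK : IsConeOrder K) (hFm : StronglyMonotoneMap K F) {a b : E}
    (h : coneLE K a b) : coneLE K (F a) (F b) := by
  rcases le_cases h with h'|rfl
  · exact ll_to_le (hFm _ _ h')
  · exact leRefl hK _

lemma iter_mono (hK : IsConeOrder K) (hFm : StronglyMonotoneMap K F) {a b : E}
    (h : coneLE K a b) : ∀ n, coneLE K (F^[n] a) (F^[n] b) := by
  intro n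
  induction n with
  | zero => simpa using h
  | succ n ih =>
    rw [Function.iterate_succ_apply', Function.iterate_succ_apply']
    exact mono_le hK hFm ih

end ULC
namespace ULC

variable {E : Type u} [NormedAddCommGroup E] [NormedSpace ℝ E]
  [MeasurableSpace E] [BorelSpace E]

variable {K : Set E} {F : E → E} {X : Set E} {x₀ z w q : E}

lemma omega_iff : z ∈ omegaSet F x₀ ↔ ∀ ε > (0:ℝ), ∀ N : ℕ, ∃ n, N ≤ n ∧ dist (F^[n] x₀) z < ε := by
  constructor
  · intro hz ε hε N
    have h := Set.mem_iInter.mp hz N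
    obtain ⟨w, ⟨n, rfl⟩, hd⟩ := Metric.mem_closure_iff.mp h ε hε
    refine ⟨n + N, Nat.le_add_left _ _, ?_⟩
    rw [Function.iterate_add_apply]
    rwa [dist_comm]
  · intro h
    refine Set.mem_iInter.mpr fun k => Metric.mem_closure_iff.mpr fun ε hε => ?_
    obtain ⟨n, hn, hd⟩ := h ε hε k
    refine ⟨F^[n] x₀, ⟨n - k, ?_⟩, by rwa [dist_comm]⟩
    rw [← Function.iterate_add_apply, Nat.sub_add_cancel hn]

lemma omega_closed : IsClosed (omegaSet F x₀) := isClosed_iInter fun _ => isClosed_closure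

lemma omega_subset_orbitClosure : omegaSet F x₀ ⊆ closure (semiOrbit F x₀) := by
  intro z hz
  have h := Set.mem_iInter.mp hz 0
  simpa using h

lemma omega_compact (hc : IsCompact (closure (semiOrbit F x₀))) : IsCompact (omegaSet F x₀) :=
  hc.of_isClosed_subset omega_closed omega_subset_orbitClosure

lemma omega_inv (hFc : Continuous F) (hz : z ∈ omegaSet F x₀) : F z ∈ omegaSet F x₀ := by
  rw [omega_iff] at hz ⊢
  intro ε hε N
  obtain ⟨δ, hδ, hcont⟩ := Metric.continuous_iff.mp hFc z ε hε
  obtain ⟨n, hn, hd⟩ := hz δ hδ N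
  refine ⟨n + 1, le_trans hn (Nat.le_succ n), ?_⟩
  rw [Function.iterate_succ_apply']
  exact hcont _ hd

lemma exists_times (hz : z ∈ omegaSet F x₀) :
    ∃ τ : ℕ → ℕ, Tendsto τ atTop atTop ∧ Tendsto (fun j => F^[τ j] x₀) atTop (𝓝 z) := by
  have h := omega_iff.mp hz
  choose f hf1 hf2 using fun j : ℕ => h (1/((j:ℝ)+1)) (by positivity) j
  refine ⟨f, tendsto_atTop_mono hf1 tendsto_id, ?_⟩
  rw [tendsto_iff_dist_tendsto_zero]
  exact squeeze_zero (fun j => dist_nonneg) (fun j => (hf2 j).le)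
    tendsto_one_div_add_atTop_nhds_zero_nat

lemma omega_of_times {τ : ℕ → ℕ} (hτ : Tendsto τ atTop atTop)
    (hconv : Tendsto (fun j => F^[τ j] w) atTop (𝓝 q)) : q ∈ omegaSet F w := by
  rw [omega_iff]
  intro ε hε N
  have h1 : ∀ᶠ j in atTop, N ≤ τ j := hτ.eventually_ge_atTop N
  have h2 : ∀ᶠ j in atTop, dist (F^[τ j] w) q < ε := by
    have := Metric.tendsto_nhds.mp hconv ε hε
    exact this
  obtain ⟨j, hj1, hj2⟩ := (h1.and h2).exists
  exact ⟨τ j, hj1, hj2⟩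

lemma pair_up (hK : IsConeOrder K) (hFm : StronglyMonotoneMap K F) {w w' z : E}
    (hle : coneLE K w w') (hcomp : IsCompact (closure (semiOrbit F w')))
    (hz : z ∈ omegaSet F w) :
    ∃ q ∈ omegaSet F w', coneLE K z q := by
  obtain ⟨τ, hτ, hconv⟩ := exists_times hz
  have hmem : ∀ j, F^[τ j] w' ∈ closure (semiOrbit F w') := fun j => subset_closure ⟨τ j, rfl⟩
  obtain ⟨q, hqmem, φ, hφ, hconv'⟩ := hcomp.tendsto_subseq hmem
  refine ⟨q, omega_of_times (hτ.comp hφ.tendsto_atTop) hconv', ?_⟩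
  have hlim : Tendsto (fun j => F^[τ (φ j)] w' - F^[τ (φ j)] w) atTop (𝓝 (q - z)) :=
    hconv'.sub (hconv.comp hφ.tendsto_atTop)
  exact hK.1.mem_of_tendsto hlim (Filter.Eventually.of_forall fun j => iter_mono hK hFm hle _)

lemma pair_down (hK : IsConeOrder K) (hFm : StronglyMonotoneMap K F) {w w' z : E}
    (hle : coneLE K w w') (hcomp : IsCompact (closure (semiOrbit F w)))
    (hz : z ∈ omegaSet F w') :
    ∃ p ∈ omegaSet F w, coneLE K p z := by
  obtain ⟨τ, hτ, hconv⟩ := exists_times hz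
  have hmem : ∀ j, F^[τ j] w ∈ closure (semiOrbit F w) := fun j => subset_closure ⟨τ j, rfl⟩
  obtain ⟨p, hpmem, φ, hφ, hconv'⟩ := hcomp.tendsto_subseq hmem
  refine ⟨p, omega_of_times (hτ.comp hφ.tendsto_atTop) hconv', ?_⟩
  have hlim : Tendsto (fun j => F^[τ (φ j)] w' - F^[τ (φ j)] w) atTop (𝓝 (z - p)) :=
    (hconv.comp hφ.tendsto_atTop).sub hconv'
  exact hK.1.mem_of_tendsto hlim (Filter.Eventually.of_forall fun j => iter_mono hK hFm hle _)

end ULC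
namespace ULC

variable {E : Type u} [NormedAddCommGroup E] [NormedSpace ℝ E]
  [MeasurableSpace E] [BorelSpace E]

variable {K : Set E} {F : E → E} {X : Set E} {x₀ : E}

lemma push_iter (hK : IsConeOrder K) (hFm : StronglyMonotoneMap K F) {a b : ℕ}
    (hab : coneLE K (F^[a] x₀) (F^[b] x₀)) (j : ℕ) :
    coneLE K (F^[j + a] x₀) (F^[j + b] x₀) := by
  have := iter_mono hK hFm hab j
  rwa [← Function.iterate_add_apply, ← Function.iterate_add_apply] at this

lemma chain_dec (hK : IsConeOrder K) (hFm : StronglyMonotoneMap K F) {n d : ℕ}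
    (h : coneLE K (F^[n + d] x₀) (F^[n] x₀)) :
    ∀ j i, coneLE K (F^[n + j + i * d] x₀) (F^[n + j] x₀) := by
  intro j i
  induction i with
  | zero => simpa using leRefl hK _
  | succ i ih =>
    have hp := push_iter hK hFm h (j + i * d)
    rw [show j + i * d + (n + d) = n + j + (i+1) * d by ring,
        show j + i * d + n = n + j + i * d by ring] at hp
    exact leTrans hK hp ih

lemma chain_inc (hK : IsConeOrder K) (hFm : StronglyMonotoneMap K F) {n d : ℕ}
    (h : coneLE K (F^[n] x₀) (F^[n + d] x₀)) :
    ∀ j i, coneLE K (F^[n + j] x₀) (F^[n + j + i * d] x₀) := by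
  intro j i
  induction i with
  | zero => simpa using leRefl hK _
  | succ i ih =>
    have hp := push_iter hK hFm h (j + i * d)
    rw [show j + i * d + (n + d) = n + j + (i+1) * d by ring,
        show j + i * d + n = n + j + i * d by ring] at hp
    exact leTrans hK ih hp

lemma no_ll_in_omega (hK : IsConeOrder K) (h0 : (0:E) ∉ interior K) (hFc : Continuous F)
    (hFm : StronglyMonotoneMap K F) {a b : E}
    (ha : a ∈ omegaSet F x₀) (hb : b ∈ omegaSet F x₀) (hab : coneLL K a b) : False := by
  obtain ⟨ρ, hρ, habs⟩ := absorb hK hab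
  obtain ⟨n₁, -, hn₁⟩ := omega_iff.mp hb ρ hρ 0
  obtain ⟨m₁, hm₁ge, hm₁⟩ := omega_iff.mp ha ρ hρ (n₁+1)
  obtain ⟨n₂, hn₂ge, hn₂⟩ := omega_iff.mp hb ρ hρ (m₁+1)
  have h1 : coneLE K (F^[m₁] x₀) (F^[n₁] x₀) := habs _ _ hm₁ hn₁
  have h2 : coneLE K (F^[m₁] x₀) (F^[n₂] x₀) := habs _ _ hm₁ hn₂
  set d := m₁ - n₁ with hd
  set d' := n₂ - m₁ with hd'
  have hdpos : 1 ≤ d := by omega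
  have hd'pos : 1 ≤ d' := by omega
  have hm₁eq : n₁ + d = m₁ := by omega
  have hn₂eq : m₁ + d' = n₂ := by omega
  set P := d * d' with hP
  have hPpos : 0 < P := Nat.mul_pos hdpos hd'pos
  -- eventual periodicity
  have hper : ∀ j, F^[m₁ + j + P] x₀ = F^[m₁ + j] x₀ := by
    intro j
    have hdec : coneLE K (F^[m₁ + j + P] x₀) (F^[m₁ + j] x₀) := by
      have := chain_dec (x₀ := x₀) hK hFm (n := n₁) (d := d) (by rwa [hm₁eq]) (d + j) d'
      rw [show n₁ + (d + j) = m₁ + j by omega, show d' * d = P by rw [hP, mul_comm]] at this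
      exact this
    have hinc : coneLE K (F^[m₁ + j] x₀) (F^[m₁ + j + P] x₀) := by
      have := chain_inc (x₀ := x₀) hK hFm (n := m₁) (d := d') (by rwa [hn₂eq]) j d
      rw [show d * d' = P from rfl] at this
      exact this
    exact leAntisym hK hdec hinc
  have hmod : ∀ c, F^[m₁ + c] x₀ = F^[m₁ + c % P] x₀ := by
    intro c
    induction c using Nat.strong_induction_on with
    | _ c ih =>
      by_cases hc : c < P
      · rw [Nat.mod_eq_of_lt hc]
      · push_neg at hc
        have h3 : m₁ + c = m₁ + (c - P) + P := by omega
        rw [h3, hper (c - P), ih (c - P) (by omega), Nat.mod_eq_sub_mod hc]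
  -- the orbit tail is a finite set
  set V : Set E := (fun i => F^[m₁ + i] x₀) '' (Set.Iio P) with hV
  have horbV : semiOrbit F (F^[m₁] x₀) ⊆ V := by
    rintro _ ⟨n, rfl⟩
    refine ⟨n % P, Nat.mod_lt _ hPpos, ?_⟩
    show F^[m₁ + n % P] x₀ = F^[n] (F^[m₁] x₀)
    rw [← hmod, ← Function.iterate_add_apply, Nat.add_comm]
  have hVfin : V.Finite := (Set.finite_Iio P).image _
  have hmemV : ∀ {c : E}, c ∈ omegaSet F x₀ → c ∈ V := by
    intro c hc
    have h4 := Set.mem_iInter.mp hc m₁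
    exact closure_minimal horbV hVfin.isClosed h4
  obtain ⟨ia, hia, haeq⟩ := hmemV ha
  obtain ⟨ib, hib, hbeq⟩ := hmemV hb
  simp only [Set.mem_Iio] at hia hib
  set k := (ib + P - ia) % P with hk
  have hkeq : (ia + k) % P = ib := by
    have e1 : (ia + k) % P = (ia + (ib + P - ia)) % P := by
      have : k ≡ ib + P - ia [MOD P] := Nat.mod_modEq _ _
      exact (this.add_left ia)
    rw [e1, show ia + (ib + P - ia) = ib + P by omega, Nat.add_mod_right,
      Nat.mod_eq_of_lt hib]
  have hba : F^[k] a = b := by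
    rw [← haeq, ← hbeq, ← Function.iterate_add_apply,
      show k + (m₁ + ia) = m₁ + (ia + k) by ring, hmod, hkeq]
  rcases Nat.eq_zero_or_pos k with hk0|hkpos
  · have hab' : a = b := by rw [← hba, hk0]; simp
    rw [coneLL, ← hab', sub_self] at hab
    exact h0 hab
  · have haleb : coneLE K a (F^[k] a) := by rw [hba]; exact ll_to_le hab
    have hstep : ∀ i, coneLE K (F^[k*i] a) (F^[k*(i+1)] a) := by
      intro i
      have := iter_mono hK hFm haleb (k*i)
      rwa [← Function.iterate_add_apply, show k*i + k = k*(i+1) by ring] at this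
    have hchain : ∀ i, 1 ≤ i → coneLE K (F^[k] a) (F^[k*i] a) := by
      intro i hi
      induction i, hi using Nat.le_induction with
      | base => simpa using leRefl hK _
      | succ i hi ih => exact leTrans hK ih (hstep i)
    have hPa : F^[P] a = a := by
      rw [← haeq, ← Function.iterate_add_apply, show P + (m₁ + ia) = m₁ + ia + P by ring,
        hper ia]
    have hPmul : ∀ i, F^[P * i] a = a := by
      intro i
      induction i with
      | zero => simp
      | succ i ih =>
        rw [show P * (i+1) = P * i + P by ring, Function.iterate_add_apply, hPa, ih]
    have hfin : coneLE K (F^[k] a) a := by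
      have := hchain P (by omega)
      rwa [mul_comm, hPmul] at this
    have h5 : a - b ∈ K := by rw [← hba]; exact hfin
    have h6 := intK_add_K hK hab h5
    rw [show (b - a) + (a - b) = 0 by abel] at h6
    exact h0 h6

end ULC
namespace ULC

variable {E : Type u} [NormedAddCommGroup E] [NormedSpace ℝ E]
  [MeasurableSpace E] [BorelSpace E]

variable (K : Set E) (F : E → E) (X : Set E)

/-- Cloud of ω-limit sets over the half-open order window `(a, b]` (within `X`). -/
def Gset (a b : E) : Set E :=
  closure (⋃ w ∈ {y ∈ X | coneLT K a y ∧ coneLE K y b}, omegaSet F w)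

/-- Cloud of ω-limit sets over the half-open order window `[a, b)` (within `X`). -/
def Hset (a b : E) : Set E :=
  closure (⋃ w ∈ {y ∈ X | coneLT K y b ∧ coneLE K a y}, omegaSet F w)

/-- Cloud of ω-limit sets over the open order window `(a, b)` (within `X`). -/
def Oset (a b : E) : Set E :=
  closure (⋃ w ∈ {y ∈ X | coneLT K a y ∧ coneLT K y b}, omegaSet F w)

variable {K F X}

lemma isClosed_Gset {a b : E} : IsClosed (Gset K F X a b) := isClosed_closure
lemma isClosed_Hset {a b : E} : IsClosed (Hset K F X a b) := isClosed_closure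

lemma omegaPlus_subset_Gset {x u : E} (hu : u ∈ X) (hll : coneLL K x u) :
    omegaPlus K F X x ⊆ Gset K F X x u :=
  Set.biInter_subset_of_mem (show u ∈ {u ∈ X | coneLL K x u} from ⟨hu, hll⟩)

lemma omegaMinus_subset_Hset {x u : E} (hu : u ∈ X) (hll : coneLL K u x) :
    omegaMinus K F X x ⊆ Hset K F X u x :=
  Set.biInter_subset_of_mem (show u ∈ {u ∈ X | coneLL K u x} from ⟨hu, hll⟩)

lemma Gset_mono_left (hK : IsConeOrder K) {a a' b : E} (h : coneLE K a' a) :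
    Gset K F X a b ⊆ Gset K F X a' b := by
  apply closure_mono
  refine Set.biUnion_subset_biUnion_left ?_
  rintro w ⟨hwX, hlt, hle⟩
  exact ⟨hwX, ltTrans_le_lt hK h hlt, hle⟩

lemma Gset_mono_right (hK : IsConeOrder K) {a b b' : E} (h : coneLE K b b') :
    Gset K F X a b ⊆ Gset K F X a b' := by
  apply closure_mono
  refine Set.biUnion_subset_biUnion_left ?_
  rintro w ⟨hwX, hlt, hle⟩
  exact ⟨hwX, hlt, leTrans hK hle h⟩

lemma Hset_mono_left (hK : IsConeOrder K) {a a' b : E} (h : coneLE K a' a) :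
    Hset K F X a b ⊆ Hset K F X a' b := by
  apply closure_mono
  refine Set.biUnion_subset_biUnion_left ?_
  rintro w ⟨hwX, hlt, hle⟩
  exact ⟨hwX, hlt, leTrans hK h hle⟩

lemma Hset_mono_right (hK : IsConeOrder K) {a b b' : E} (h : coneLE K b b') :
    Hset K F X a b ⊆ Hset K F X a b' := by
  apply closure_mono
  refine Set.biUnion_subset_biUnion_left ?_
  rintro w ⟨hwX, hlt, hle⟩
  exact ⟨hwX, ltTrans_lt_le hK hlt h, hle⟩

lemma Gset_decomp (hK : IsConeOrder K) {a b : E} (hbX : b ∈ X) (hab : coneLT K a b) :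
    Gset K F X a b = Oset K F X a b ∪ omegaSet F b := by
  have hwin : {y ∈ X | coneLT K a y ∧ coneLE K y b}
      = {y ∈ X | coneLT K a y ∧ coneLT K y b} ∪ {b} := by
    ext w
    constructor
    · rintro ⟨hwX, hlt, hle⟩
      rcases le_cases hle with h'|rfl
      · exact Or.inl ⟨hwX, hlt, h'⟩
      · exact Or.inr rfl
    · rintro (⟨hwX, hlt, hlt'⟩|rfl)
      · exact ⟨hwX, hlt, hlt'.1⟩
      · exact ⟨hbX, hab, leRefl hK _⟩
  rw [Gset, hwin, Set.biUnion_union, Set.biUnion_singleton, closure_union, Oset,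
    omega_closed.closure_eq]

lemma Hset_decomp (hK : IsConeOrder K) {a b : E} (haX : a ∈ X) (hab : coneLT K a b) :
    Hset K F X a b = Oset K F X a b ∪ omegaSet F a := by
  have hwin : {y ∈ X | coneLT K y b ∧ coneLE K a y}
      = {y ∈ X | coneLT K a y ∧ coneLT K y b} ∪ {a} := by
    ext w
    constructor
    · rintro ⟨hwX, hlt, hle⟩
      rcases le_cases hle with h'|h'
      · exact Or.inl ⟨hwX, h', hlt⟩
      · exact Or.inr h'.symm
    · rintro (⟨hwX, hlt, hlt'⟩|rfl)
      · exact ⟨hwX, hlt', hlt.1⟩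
      · exact ⟨haX, hab, leRefl hK _⟩
  rw [Hset, hwin, Set.biUnion_union, Set.biUnion_singleton, closure_union, Oset,
    omega_closed.closure_eq]

lemma below_of_closure (hK : IsConeOrder K) (hFm : StronglyMonotoneMap K F) {x₀ z : E}
    (hcompt : IsCompact (closure (semiOrbit F x₀)))
    {W : Set E} (hW : ∀ w ∈ W, coneLE K x₀ w)
    (hz : z ∈ closure (⋃ w ∈ W, omegaSet F w)) :
    ∃ r ∈ omegaSet F x₀, coneLE K r z := by
  obtain ⟨p, hp, hconv⟩ := mem_closure_iff_seq_limit.mp hz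
  have hcar := fun j => Set.mem_iUnion₂.mp (hp j)
  choose wc hwc hpmem using hcar
  have hpair := fun j => pair_down hK hFm (hW _ (hwc j)) hcompt (hpmem j)
  choose rj hrj hrle using hpair
  obtain ⟨r, hrmem, φ, hφ, hconv'⟩ := (omega_compact hcompt).tendsto_subseq hrj
  refine ⟨r, hrmem, ?_⟩
  have hlim : Tendsto (fun j => p (φ j) - rj (φ j)) atTop (𝓝 (z - r)) :=
    (hconv.comp hφ.tendsto_atTop).sub hconv'
  exact hK.1.mem_of_tendsto hlim (Filter.Eventually.of_forall fun j => hrle _)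

lemma above_of_closure (hK : IsConeOrder K) (hFm : StronglyMonotoneMap K F) {x₀ z : E}
    (hcompt : IsCompact (closure (semiOrbit F x₀)))
    {W : Set E} (hW : ∀ w ∈ W, coneLE K w x₀)
    (hz : z ∈ closure (⋃ w ∈ W, omegaSet F w)) :
    ∃ r ∈ omegaSet F x₀, coneLE K z r := by
  obtain ⟨p, hp, hconv⟩ := mem_closure_iff_seq_limit.mp hz
  have hcar := fun j => Set.mem_iUnion₂.mp (hp j)
  choose wc hwc hpmem using hcar
  have hpair := fun j => pair_up hK hFm (hW _ (hwc j)) hcompt (hpmem j)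
  choose rj hrj hrle using hpair
  obtain ⟨r, hrmem, φ, hφ, hconv'⟩ := (omega_compact hcompt).tendsto_subseq hrj
  refine ⟨r, hrmem, ?_⟩
  have hlim : Tendsto (fun j => rj (φ j) - p (φ j)) atTop (𝓝 (r - z)) :=
    hconv'.sub (hconv.comp hφ.tendsto_atTop)
  exact hK.1.mem_of_tendsto hlim (Filter.Eventually.of_forall fun j => hrle _)

lemma core_contra (hK : IsConeOrder K) (h0 : (0:E) ∉ interior K) (hFc : Continuous F)
    (hFm : StronglyMonotoneMap K F) {x₀ z : E}
    (hbelow : ∃ r ∈ omegaSet F x₀, coneLE K r z)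
    (habove : ∃ r' ∈ omegaSet F x₀, coneLE K z r')
    (hz : z ∉ omegaSet F x₀) : False := by
  obtain ⟨r, hr, hrz⟩ := hbelow
  obtain ⟨r', hr', hzr'⟩ := habove
  have hrr' : coneLT K r r' := by
    refine ⟨leTrans hK hrz hzr', ?_⟩
    rintro rfl
    exact hz ((leAntisym hK hrz hzr') ▸ hr)
  exact no_ll_in_omega hK h0 hFc hFm (omega_inv hFc hr) (omega_inv hFc hr')
    (hFm _ _ hrr')

lemma countable_of_data {S : Set ℝ} {ι : Type*} [Countable ι] {P : ℝ → ι → Prop}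
    (hex : ∀ t ∈ S, ∃ d, P t d)
    (huniq : ∀ t₁ t₂ d, P t₁ d → P t₂ d → t₁ = t₂) :
    S.Countable := by
  have hsub : S ⊆ ⋃ d : ι, {t | P t d} := by
    intro t ht
    obtain ⟨d, hd⟩ := hex t ht
    exact Set.mem_iUnion.mpr ⟨d, hd⟩
  refine Set.Countable.mono hsub (Set.countable_iUnion fun d => ?_)
  exact Set.Subsingleton.countable fun t₁ h₁ t₂ h₂ => huniq t₁ t₂ d h₁ h₂

lemma sep_ball {D : Set E} (hDd : Dense D) {C : Set E} (hC : IsClosed C) {z : E} (hz : z ∉ C) :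
    ∃ c ∈ D, ∃ q : ℚ, 0 < (q:ℝ) ∧ dist z c ≤ (q:ℝ) ∧ ∀ w ∈ C, ¬ dist w c ≤ (q:ℝ) := by
  obtain ⟨ε, hε, hball⟩ := Metric.isOpen_iff.mp hC.isOpen_compl z hz
  obtain ⟨c, hc, hdc⟩ := hDd.exists_dist_lt z (show (0:ℝ) < ε/4 by positivity)
  obtain ⟨q, hq1, hq2⟩ := exists_rat_btwn (show ε/4 < ε/2 by linarith)
  refine ⟨c, hc, q, by linarith, by linarith [hdc], ?_⟩
  intro w hw hwc
  have hle : dist w z < ε := by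
    calc dist w z ≤ dist w c + dist c z := dist_triangle _ _ _
      _ ≤ (q:ℝ) + dist c z := by linarith
      _ < ε/2 + ε/4 := by rw [dist_comm]; linarith
      _ < ε := by linarith
  exact hball hle hw

end ULC
namespace ULC

variable {E : Type u} [NormedAddCommGroup E] [NormedSpace ℝ E]
  [MeasurableSpace E] [BorelSpace E]

/-- The parametrized line through `y` in direction `v`. -/
def xp (y v : E) (t : ℝ) : E := y + t • v

lemma xp_shift (y v : E) (t δ : ℝ) : xp y v (t + δ) = xp y v t + δ • v := by
  unfold xp; rw [add_smul]; abel

variable {K : Set E} {F : E → E} {X : Set E} {y v : E}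

lemma xp_line_mono (hK : IsConeOrder K) (hv : coneLL K 0 v) {t s : ℝ} (h : t < s) :
    coneLL K (xp y v t) (xp y v s) := line_mono hK hv h

lemma xp_line_le (hK : IsConeOrder K) (hv : coneLL K 0 v) {t s : ℝ} (h : t ≤ s) :
    coneLE K (xp y v t) (xp y v s) := line_le hK hv h

lemma rat_above (hK : IsConeOrder K) {t β : ℝ} {u : E}
    (hll : coneLL K (xp y v t) u) (hβ : t < β) :
    ∃ s : ℚ, t < (s:ℝ) ∧ (s:ℝ) < β ∧ coneLE K (xp y v (s:ℝ)) u := by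
  have hcont : Continuous (fun δ : ℝ => u - (xp y v t + δ • v)) := by
    continuity
  have h0mem : (fun δ : ℝ => u - (xp y v t + δ • v)) 0 ∈ interior K := by
    simpa [coneLL] using hll
  have hopen : IsOpen ((fun δ : ℝ => u - (xp y v t + δ • v)) ⁻¹' interior K) :=
    isOpen_interior.preimage hcont
  obtain ⟨ε, hε, hball⟩ := Metric.isOpen_iff.mp hopen 0 h0mem
  obtain ⟨s, hs1, hs2⟩ := exists_rat_btwn (show t < min β (t + ε) by
    simp [lt_min_iff]; exact ⟨hβ, by linarith⟩)
  rw [lt_min_iff] at hs2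
  refine ⟨s, hs1, hs2.1, ?_⟩
  have hmem : ((s:ℝ) - t) ∈ Metric.ball (0:ℝ) ε := by
    simp [Real.dist_eq, abs_of_pos (show (0:ℝ) < (s:ℝ) - t by linarith)]
    linarith [hs2.2]
  have := hball hmem
  have heq : xp y v (s:ℝ) = xp y v t + ((s:ℝ) - t) • v := by
    rw [← xp_shift]; ring_nf
  show u - xp y v (s:ℝ) ∈ K
  rw [heq]
  exact interior_subset this

lemma rat_below (hK : IsConeOrder K) {t α : ℝ} {u : E}
    (hll : coneLL K u (xp y v t)) (hα : α < t) :
    ∃ σ : ℚ, α < (σ:ℝ) ∧ (σ:ℝ) < t ∧ coneLE K u (xp y v (σ:ℝ)) := by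
  have hcont : Continuous (fun δ : ℝ => (xp y v t - δ • v) - u) := by
    continuity
  have h0mem : (fun δ : ℝ => (xp y v t - δ • v) - u) 0 ∈ interior K := by
    simpa [coneLL] using hll
  have hopen : IsOpen ((fun δ : ℝ => (xp y v t - δ • v) - u) ⁻¹' interior K) :=
    isOpen_interior.preimage hcont
  obtain ⟨ε, hε, hball⟩ := Metric.isOpen_iff.mp hopen 0 h0mem
  obtain ⟨σ, hs1, hs2⟩ := exists_rat_btwn (show max α (t - ε) < t by
    simp [max_lt_iff]; exact ⟨hα, by linarith⟩)
  rw [max_lt_iff] at hs1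
  refine ⟨σ, hs1.1, hs2, ?_⟩
  have hmem : (t - (σ:ℝ)) ∈ Metric.ball (0:ℝ) ε := by
    simp [Real.dist_eq, abs_of_pos (show (0:ℝ) < t - (σ:ℝ) by linarith)]
    linarith [hs1.2]
  have := hball hmem
  have heq : xp y v (σ:ℝ) = xp y v t - (t - (σ:ℝ)) • v := by
    have := xp_shift y v (σ:ℝ) (t - (σ:ℝ))
    rw [show (σ:ℝ) + (t - (σ:ℝ)) = t by ring] at this
    rw [this]; abel
  show xp y v (σ:ℝ) - u ∈ K
  rw [heq]
  have h2 : xp y v t - (t - (σ:ℝ)) • v - u ∈ interior K := this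
  exact interior_subset h2

end ULC
namespace ULC

variable {E : Type u} [NormedAddCommGroup E] [NormedSpace ℝ E]
  [MeasurableSpace E] [BorelSpace E]

section Window

variable {K : Set E} {F : E → E} {X : Set E} {y v : E} {α β : ℝ}
variable (hK : IsConeOrder K) (h0 : (0:E) ∉ interior K) (hFc : Continuous F)
  (hFm : StronglyMonotoneMap K F) (hXoc : OrderConvexSet K X)
  (hωc : OmegaCompactIntervals K F X) (hv : coneLL K 0 v) (hαβ : α < β)
  (hXα : xp y v α ∈ X) (hXβ : xp y v β ∈ X)

include hK hv

lemma x_mem_ordCC {t : ℝ} (ht1 : α ≤ t) (ht2 : t ≤ β) :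
    xp y v t ∈ ordCC K (xp y v α) (xp y v β) :=
  ⟨xp_line_le hK hv ht1, xp_line_le hK hv ht2⟩

include h0 hXoc hXα hXβ hαβ in
lemma x_mem_X {t : ℝ} (ht1 : α ≤ t) (ht2 : t ≤ β) : xp y v t ∈ X :=
  hXoc _ hXα _ hXβ (ll_to_lt h0 (xp_line_mono hK hv hαβ)) (x_mem_ordCC hK hv ht1 ht2)

include hωc hXα hXβ hαβ in
lemma orbit_cpt {t : ℝ} (ht1 : α ≤ t) (ht2 : t ≤ β) :
    IsCompact (closure (semiOrbit F (xp y v t))) :=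
  ((hωc _ hXα _ hXβ (ll_to_le (xp_line_mono hK hv hαβ))).1 _ (x_mem_ordCC hK hv ht1 ht2)).1

include h0 hXoc hXα hXβ hαβ in
lemma count_B_plus [TopologicalSpace.SeparableSpace E] :
    Set.Countable {t | t ∈ Set.Ioo α β ∧
      ∃ z ∈ omegaSet F (xp y v t), z ∉ omegaPlus K F X (xp y v t)} := by
  obtain ⟨D, hDc, hDd⟩ := TopologicalSpace.exists_countable_dense E
  have hDco : Countable ↥D := hDc.to_subtype
  apply countable_of_data (ι := ↥D × ℚ × ℚ)
    (P := fun t d => (α < t ∧ t < ((d.2.2 : ℚ):ℝ) ∧ ((d.2.2:ℚ):ℝ) < β) ∧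
      (∃ z ∈ omegaSet F (xp y v t), dist z (d.1:E) ≤ ((d.2.1:ℚ):ℝ)) ∧
      (∀ w ∈ Gset K F X (xp y v t) (xp y v ((d.2.2:ℚ):ℝ)), ¬ dist w (d.1:E) ≤ ((d.2.1:ℚ):ℝ)))
  · rintro t ⟨htI, z, hzω, hzplus⟩
    unfold omegaPlus at hzplus
    have hex : ∃ u ∈ {u | u ∈ X ∧ coneLL K (xp y v t) u}, z ∉ closure
        (⋃ w ∈ {y₁ | y₁ ∈ X ∧ coneLT K (xp y v t) y₁ ∧ coneLE K y₁ u}, omegaSet F w) := by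
      by_contra hcon
      push_neg at hcon
      exact hzplus (Set.mem_iInter₂.mpr hcon)
    obtain ⟨u, ⟨huX, hull⟩, hznot⟩ := hex
    obtain ⟨s, hts, hsβ, hsu⟩ := rat_above hK hull htI.2
    have hznotG : z ∉ Gset K F X (xp y v t) (xp y v (s:ℝ)) := by
      intro hmem
      exact hznot (Gset_mono_right hK hsu hmem)
    obtain ⟨c, hcD, q, hq0, hqz, hqnot⟩ := sep_ball hDd isClosed_Gset hznotG
    exact ⟨⟨⟨c, hcD⟩, q, s⟩, ⟨htI.1, hts, hsβ⟩, ⟨z, hzω, hqz⟩, hqnot⟩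
  · rintro t₁ t₂ ⟨c, q, s⟩ ⟨⟨ha₁, hs₁, hsβ⟩, ⟨z₁, hz₁, hd₁⟩, hneg₁⟩
      ⟨⟨ha₂, hs₂, _⟩, ⟨z₂, hz₂, hd₂⟩, hneg₂⟩
    by_contra hne
    rcases lt_or_gt_of_ne hne with h|h
    · refine hneg₁ z₂ ?_ hd₂
      refine subset_closure (Set.mem_iUnion₂.mpr ⟨xp y v t₂, ?_, hz₂⟩)
      exact ⟨x_mem_X hK h0 hXoc hv hαβ hXα hXβ ha₂.le (le_trans hs₂.le hsβ.le),
        ll_to_lt h0 (xp_line_mono hK hv h), xp_line_le hK hv hs₂.le⟩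
    · refine hneg₂ z₁ ?_ hd₁
      refine subset_closure (Set.mem_iUnion₂.mpr ⟨xp y v t₁, ?_, hz₁⟩)
      exact ⟨x_mem_X hK h0 hXoc hv hαβ hXα hXβ ha₁.le (le_trans hs₁.le hsβ.le),
        ll_to_lt h0 (xp_line_mono hK hv h), xp_line_le hK hv hs₁.le⟩

end Window

end ULC
namespace ULC

variable {E : Type u} [NormedAddCommGroup E] [NormedSpace ℝ E]
  [MeasurableSpace E] [BorelSpace E]

section Window2

variable {K : Set E} {F : E → E} {X : Set E} {y v : E} {α β : ℝ}
variable (hK : IsConeOrder K) (h0 : (0:E) ∉ interior K) (hFc : Continuous F)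
  (hFm : StronglyMonotoneMap K F) (hXoc : OrderConvexSet K X)
  (hωc : OmegaCompactIntervals K F X) (hv : coneLL K 0 v) (hαβ : α < β)
  (hXα : xp y v α ∈ X) (hXβ : xp y v β ∈ X)

include hK hv h0 hXoc hXα hXβ hαβ in
lemma count_B_minus [TopologicalSpace.SeparableSpace E] :
    Set.Countable {t | t ∈ Set.Ioo α β ∧
      ∃ z ∈ omegaSet F (xp y v t), z ∉ omegaMinus K F X (xp y v t)} := by
  obtain ⟨D, hDc, hDd⟩ := TopologicalSpace.exists_countable_dense E
  have hDco : Countable ↥D := hDc.to_subtype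
  apply countable_of_data (ι := ↥D × ℚ × ℚ)
    (P := fun t d => (α < ((d.2.2:ℚ):ℝ) ∧ ((d.2.2:ℚ):ℝ) < t ∧ t < β) ∧
      (∃ z ∈ omegaSet F (xp y v t), dist z (d.1:E) ≤ ((d.2.1:ℚ):ℝ)) ∧
      (∀ w ∈ Hset K F X (xp y v ((d.2.2:ℚ):ℝ)) (xp y v t), ¬ dist w (d.1:E) ≤ ((d.2.1:ℚ):ℝ)))
  · rintro t ⟨htI, z, hzω, hzminus⟩
    unfold omegaMinus at hzminus
    have hex : ∃ u ∈ {u | u ∈ X ∧ coneLL K u (xp y v t)}, z ∉ closure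
        (⋃ w ∈ {y₁ | y₁ ∈ X ∧ coneLT K y₁ (xp y v t) ∧ coneLE K u y₁}, omegaSet F w) := by
      by_contra hcon
      push_neg at hcon
      exact hzminus (Set.mem_iInter₂.mpr hcon)
    obtain ⟨u, ⟨huX, hull⟩, hznot⟩ := hex
    obtain ⟨σ, hασ, hσt, hσu⟩ := rat_below hK hull htI.1
    have hznotH : z ∉ Hset K F X (xp y v (σ:ℝ)) (xp y v t) := by
      intro hmem
      exact hznot (Hset_mono_left hK hσu hmem)
    obtain ⟨c, hcD, q, hq0, hqz, hqnot⟩ := sep_ball hDd isClosed_Hset hznotH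
    exact ⟨⟨⟨c, hcD⟩, q, σ⟩, ⟨hασ, hσt, htI.2⟩, ⟨z, hzω, hqz⟩, hqnot⟩
  · rintro t₁ t₂ ⟨c, q, σ⟩ ⟨⟨hασ, hσ₁, hβ₁⟩, ⟨z₁, hz₁, hd₁⟩, hneg₁⟩
      ⟨⟨_, hσ₂, hβ₂⟩, ⟨z₂, hz₂, hd₂⟩, hneg₂⟩
    by_contra hne
    rcases lt_or_gt_of_ne hne with h|h
    · refine hneg₂ z₁ ?_ hd₁
      refine subset_closure (Set.mem_iUnion₂.mpr ⟨xp y v t₁, ?_, hz₁⟩)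
      exact ⟨x_mem_X hK h0 hXoc hv hαβ hXα hXβ (le_trans hασ.le hσ₁.le) hβ₁.le,
        ll_to_lt h0 (xp_line_mono hK hv h), xp_line_le hK hv hσ₁.le⟩
    · refine hneg₁ z₂ ?_ hd₂
      refine subset_closure (Set.mem_iUnion₂.mpr ⟨xp y v t₂, ?_, hz₂⟩)
      exact ⟨x_mem_X hK h0 hXoc hv hαβ hXα hXβ (le_trans hασ.le hσ₂.le) hβ₂.le,
        ll_to_lt h0 (xp_line_mono hK hv h), xp_line_le hK hv hσ₂.le⟩

include hK hv in
lemma count_J_plus [TopologicalSpace.SeparableSpace E] (σ : ℚ) :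
    Set.Countable {t : ℝ | ((σ:ℝ) < t ∧ t < β) ∧ ∃ z,
      (∀ s : ℚ, t < (s:ℝ) → (s:ℝ) < β → z ∈ Gset K F X (xp y v (σ:ℝ)) (xp y v (s:ℝ))) ∧
      z ∉ Gset K F X (xp y v (σ:ℝ)) (xp y v t)} := by
  obtain ⟨D, hDc, hDd⟩ := TopologicalSpace.exists_countable_dense E
  have hDco : Countable ↥D := hDc.to_subtype
  apply countable_of_data (ι := ↥D × ℚ)
    (P := fun t d => ((σ:ℝ) < t ∧ t < β) ∧
      (∃ z, (∀ s : ℚ, t < (s:ℝ) → (s:ℝ) < β →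
          z ∈ Gset K F X (xp y v (σ:ℝ)) (xp y v (s:ℝ))) ∧ dist z (d.1:E) ≤ ((d.2:ℚ):ℝ)) ∧
      (∀ w ∈ Gset K F X (xp y v (σ:ℝ)) (xp y v t), ¬ dist w (d.1:E) ≤ ((d.2:ℚ):ℝ)))
  · rintro t ⟨htI, z, hpos, hneg⟩
    obtain ⟨c, hcD, q, hq0, hqz, hqnot⟩ := sep_ball hDd isClosed_Gset hneg
    exact ⟨⟨⟨c, hcD⟩, q⟩, htI, ⟨z, hpos, hqz⟩, hqnot⟩
  · rintro t₁ t₂ ⟨c, q⟩ ⟨⟨hσ₁, hβ₁⟩, ⟨z₁, hpos₁, hd₁⟩, hneg₁⟩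
      ⟨⟨hσ₂, hβ₂⟩, ⟨z₂, hpos₂, hd₂⟩, hneg₂⟩
    by_contra hne
    rcases lt_or_gt_of_ne hne with h|h
    · obtain ⟨s, hs1, hs2⟩ := exists_rat_btwn h
      refine hneg₂ z₁ (Gset_mono_right hK (xp_line_le hK hv hs2.le)
        (hpos₁ s hs1 (lt_trans hs2 hβ₂))) hd₁
    · obtain ⟨s, hs1, hs2⟩ := exists_rat_btwn h
      refine hneg₁ z₂ (Gset_mono_right hK (xp_line_le hK hv hs2.le)
        (hpos₂ s hs1 (lt_trans hs2 hβ₁))) hd₂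

include hK hv in
lemma count_J_minus [TopologicalSpace.SeparableSpace E] (s : ℚ) :
    Set.Countable {t : ℝ | (α < t ∧ t < (s:ℝ)) ∧ ∃ z,
      (∀ σ : ℚ, α < (σ:ℝ) → (σ:ℝ) < t → z ∈ Hset K F X (xp y v (σ:ℝ)) (xp y v (s:ℝ))) ∧
      z ∉ Hset K F X (xp y v t) (xp y v (s:ℝ))} := by
  obtain ⟨D, hDc, hDd⟩ := TopologicalSpace.exists_countable_dense E
  have hDco : Countable ↥D := hDc.to_subtype
  apply countable_of_data (ι := ↥D × ℚ)
    (P := fun t d => (α < t ∧ t < (s:ℝ)) ∧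
      (∃ z, (∀ σ : ℚ, α < (σ:ℝ) → (σ:ℝ) < t →
          z ∈ Hset K F X (xp y v (σ:ℝ)) (xp y v (s:ℝ))) ∧ dist z (d.1:E) ≤ ((d.2:ℚ):ℝ)) ∧
      (∀ w ∈ Hset K F X (xp y v t) (xp y v (s:ℝ)), ¬ dist w (d.1:E) ≤ ((d.2:ℚ):ℝ)))
  · rintro t ⟨htI, z, hpos, hneg⟩
    obtain ⟨c, hcD, q, hq0, hqz, hqnot⟩ := sep_ball hDd isClosed_Hset hneg
    exact ⟨⟨⟨c, hcD⟩, q⟩, htI, ⟨z, hpos, hqz⟩, hqnot⟩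
  · rintro t₁ t₂ ⟨c, q⟩ ⟨⟨hα₁, hs₁⟩, ⟨z₁, hpos₁, hd₁⟩, hneg₁⟩
      ⟨⟨hα₂, hs₂⟩, ⟨z₂, hpos₂, hd₂⟩, hneg₂⟩
    by_contra hne
    rcases lt_or_gt_of_ne hne with h|h
    · obtain ⟨σ, hσ1, hσ2⟩ := exists_rat_btwn h
      refine hneg₁ z₂ (Hset_mono_left hK (xp_line_le hK hv hσ1.le)
        (hpos₂ σ (lt_trans hα₁ hσ1) hσ2)) hd₂
    · obtain ⟨σ, hσ1, hσ2⟩ := exists_rat_btwn h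
      refine hneg₂ z₁ (Hset_mono_left hK (xp_line_le hK hv hσ1.le)
        (hpos₁ σ (lt_trans hα₂ hσ1) hσ2)) hd₁

include hK hv in
lemma mem_omegaMinus_of {t : ℝ} {z : E} (hαt : α < t)
    (hcond : ∀ σ : ℚ, α < (σ:ℝ) → (σ:ℝ) < t → z ∈ Oset K F X (xp y v (σ:ℝ)) (xp y v t)) :
    z ∈ omegaMinus K F X (xp y v t) := by
  unfold omegaMinus
  refine Set.mem_iInter₂.mpr ?_
  rintro u ⟨huX, hull⟩
  obtain ⟨σ, hασ, hσt, hu⟩ := rat_below hK hull hαt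
  have hsub : Oset K F X (xp y v (σ:ℝ)) (xp y v t) ⊆ closure
      (⋃ w ∈ {y₁ | y₁ ∈ X ∧ coneLT K y₁ (xp y v t) ∧ coneLE K u y₁}, omegaSet F w) := by
    apply closure_mono
    refine Set.biUnion_subset_biUnion_left ?_
    rintro w ⟨hwX, hlt, hlt'⟩
    exact ⟨hwX, hlt', leTrans hK hu hlt.1⟩
  exact hsub (hcond σ hασ hσt)

include hK hv in
lemma mem_omegaPlus_of {t : ℝ} {z : E} (htβ : t < β)
    (hcond : ∀ s : ℚ, t < (s:ℝ) → (s:ℝ) < β → z ∈ Oset K F X (xp y v t) (xp y v (s:ℝ))) :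
    z ∈ omegaPlus K F X (xp y v t) := by
  unfold omegaPlus
  refine Set.mem_iInter₂.mpr ?_
  rintro u ⟨huX, hull⟩
  obtain ⟨s, hts, hsβ, hu⟩ := rat_above hK hull htβ
  have hsub : Oset K F X (xp y v t) (xp y v (s:ℝ)) ⊆ closure
      (⋃ w ∈ {y₁ | y₁ ∈ X ∧ coneLT K (xp y v t) y₁ ∧ coneLE K y₁ u}, omegaSet F w) := by
    apply closure_mono
    refine Set.biUnion_subset_biUnion_left ?_
    rintro w ⟨hwX, hlt, hlt'⟩
    exact ⟨hwX, hlt, leTrans hK hlt'.1 hu⟩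
  exact hsub (hcond s hts hsβ)

end Window2

end ULC
namespace ULC

variable {E : Type u} [NormedAddCommGroup E] [NormedSpace ℝ E]
  [MeasurableSpace E] [BorelSpace E]

section Window3

variable {K : Set E} {F : E → E} {X : Set E} {y v : E} {α β : ℝ}
variable (hK : IsConeOrder K) (h0 : (0:E) ∉ interior K) (hFc : Continuous F)
  (hFm : StronglyMonotoneMap K F) (hXoc : OrderConvexSet K X)
  (hωc : OmegaCompactIntervals K F X) (hv : coneLL K 0 v) (hαβ : α < β)
  (hXα : xp y v α ∈ X) (hXβ : xp y v β ∈ X)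

include hK h0 hFc hFm hXoc hωc hv hαβ hXα hXβ in
lemma window_plus [TopologicalSpace.SeparableSpace E] :
    Set.Countable {t | t ∈ Set.Ioo α β ∧ xp y v t ∈ Uplus K F X} := by
  have hBp := count_B_plus hK h0 hXoc hv hαβ hXα hXβ (F := F)
  have hJ : Set.Countable (⋃ σ : ℚ, {t : ℝ | ((σ:ℝ) < t ∧ t < β) ∧ ∃ z,
      (∀ s : ℚ, t < (s:ℝ) → (s:ℝ) < β → z ∈ Gset K F X (xp y v (σ:ℝ)) (xp y v (s:ℝ))) ∧
      z ∉ Gset K F X (xp y v (σ:ℝ)) (xp y v t)}) :=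
    Set.countable_iUnion fun σ => count_J_plus hK hv (y := y) (β := β) (F := F) (X := X) σ
  refine Set.Countable.mono ?_ (hBp.union hJ)
  rintro t ⟨htI, htU⟩
  rw [Set.mem_union]
  by_cases hB : ∃ z ∈ omegaSet F (xp y v t), z ∉ omegaPlus K F X (xp y v t)
  · exact Or.inl ⟨htI, hB⟩
  · right
    push_neg at hB
    have hsub : omegaSet F (xp y v t) ⊆ omegaPlus K F X (xp y v t) := fun z hz => hB z hz
    have hne : omegaPlus K F X (xp y v t) ≠ omegaSet F (xp y v t) := htU.2
    have hss : omegaSet F (xp y v t) ⊂ omegaPlus K F X (xp y v t) :=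
      hsub.ssubset_of_ne hne.symm
    obtain ⟨z, hzplus, hzω⟩ := Set.exists_of_ssubset hss
    by_contra hnotJ
    rw [Set.mem_iUnion] at hnotJ
    push_neg at hnotJ
    exfalso
    have hzG : ∀ σ : ℚ, α < (σ:ℝ) → (σ:ℝ) < t →
        z ∈ Gset K F X (xp y v (σ:ℝ)) (xp y v t) := by
      intro σ hασ hσt
      have hpos : ∀ s : ℚ, t < (s:ℝ) → (s:ℝ) < β →
          z ∈ Gset K F X (xp y v (σ:ℝ)) (xp y v (s:ℝ)) := by
        intro s hts hsβ
        have h1 : z ∈ Gset K F X (xp y v t) (xp y v (s:ℝ)) :=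
          omegaPlus_subset_Gset
            (x_mem_X hK h0 hXoc hv hαβ hXα hXβ (le_trans htI.1.le hts.le) hsβ.le)
            (xp_line_mono hK hv hts) hzplus
        exact Gset_mono_left hK (xp_line_le hK hv hσt.le) h1
      have hnot := hnotJ σ
      by_contra hzneg
      exact hnot ⟨⟨hσt, htI.2⟩, z, hpos, hzneg⟩
    have hzO : ∀ σ : ℚ, α < (σ:ℝ) → (σ:ℝ) < t →
        z ∈ Oset K F X (xp y v (σ:ℝ)) (xp y v t) := by
      intro σ h1 h2
      have hmem := hzG σ h1 h2
      rw [Gset_decomp hK (x_mem_X hK h0 hXoc hv hαβ hXα hXβ htI.1.le htI.2.le)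
        (ll_to_lt h0 (xp_line_mono hK hv h2))] at hmem
      rcases hmem with h|h
      · exact h
      · exact absurd h hzω
    have hzminus := mem_omegaMinus_of hK hv htI.1 hzO
    obtain ⟨s₀, hs₀1, hs₀2⟩ := exists_rat_btwn htI.2
    obtain ⟨σ₀, hσ₀1, hσ₀2⟩ := exists_rat_btwn htI.1
    have hcpt := orbit_cpt hK hωc hv hαβ hXα hXβ (t := t) htI.1.le htI.2.le
    have hbelow : ∃ r ∈ omegaSet F (xp y v t), coneLE K r z := by
      have hmem : z ∈ Gset K F X (xp y v t) (xp y v (s₀:ℝ)) :=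
        omegaPlus_subset_Gset
          (x_mem_X hK h0 hXoc hv hαβ hXα hXβ (le_trans htI.1.le hs₀1.le) hs₀2.le)
          (xp_line_mono hK hv hs₀1) hzplus
      unfold Gset at hmem
      exact below_of_closure hK hFm hcpt (fun w hw => hw.2.1.1) hmem
    have habove : ∃ r' ∈ omegaSet F (xp y v t), coneLE K z r' := by
      have hmem : z ∈ Hset K F X (xp y v (σ₀:ℝ)) (xp y v t) :=
        omegaMinus_subset_Hset
          (x_mem_X hK h0 hXoc hv hαβ hXα hXβ hσ₀1.le (le_trans hσ₀2.le htI.2.le))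
          (xp_line_mono hK hv hσ₀2) hzminus
      unfold Hset at hmem
      exact above_of_closure hK hFm hcpt (fun w hw => hw.2.1.1) hmem
    exact core_contra hK h0 hFc hFm hbelow habove hzω

include hK h0 hFc hFm hXoc hωc hv hαβ hXα hXβ in
lemma window_minus [TopologicalSpace.SeparableSpace E] :
    Set.Countable {t | t ∈ Set.Ioo α β ∧ xp y v t ∈ Uminus K F X} := by
  have hBm := count_B_minus hK h0 hXoc hv hαβ hXα hXβ (F := F)
  have hJ : Set.Countable (⋃ s : ℚ, {t : ℝ | (α < t ∧ t < (s:ℝ)) ∧ ∃ z,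
      (∀ σ : ℚ, α < (σ:ℝ) → (σ:ℝ) < t → z ∈ Hset K F X (xp y v (σ:ℝ)) (xp y v (s:ℝ))) ∧
      z ∉ Hset K F X (xp y v t) (xp y v (s:ℝ))}) :=
    Set.countable_iUnion fun s => count_J_minus hK hv (y := y) (α := α) (F := F) (X := X) s
  refine Set.Countable.mono ?_ (hBm.union hJ)
  rintro t ⟨htI, htU⟩
  rw [Set.mem_union]
  by_cases hB : ∃ z ∈ omegaSet F (xp y v t), z ∉ omegaMinus K F X (xp y v t)
  · exact Or.inl ⟨htI, hB⟩
  · right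
    push_neg at hB
    have hsub : omegaSet F (xp y v t) ⊆ omegaMinus K F X (xp y v t) := fun z hz => hB z hz
    have hne : omegaMinus K F X (xp y v t) ≠ omegaSet F (xp y v t) := htU.2
    have hss : omegaSet F (xp y v t) ⊂ omegaMinus K F X (xp y v t) :=
      hsub.ssubset_of_ne hne.symm
    obtain ⟨z, hzminus, hzω⟩ := Set.exists_of_ssubset hss
    by_contra hnotJ
    rw [Set.mem_iUnion] at hnotJ
    push_neg at hnotJ
    exfalso
    have hzH : ∀ s : ℚ, t < (s:ℝ) → (s:ℝ) < β →
        z ∈ Hset K F X (xp y v t) (xp y v (s:ℝ)) := by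
      intro s hts hsβ
      have hpos : ∀ σ : ℚ, α < (σ:ℝ) → (σ:ℝ) < t →
          z ∈ Hset K F X (xp y v (σ:ℝ)) (xp y v (s:ℝ)) := by
        intro σ hασ hσt
        have h1 : z ∈ Hset K F X (xp y v (σ:ℝ)) (xp y v t) :=
          omegaMinus_subset_Hset
            (x_mem_X hK h0 hXoc hv hαβ hXα hXβ hασ.le (le_trans hσt.le htI.2.le))
            (xp_line_mono hK hv hσt) hzminus
        exact Hset_mono_right hK (xp_line_le hK hv hts.le) h1
      have hnot := hnotJ s
      by_contra hzneg
      exact hnot ⟨⟨htI.1, hts⟩, z, hpos, hzneg⟩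
    have hzO : ∀ s : ℚ, t < (s:ℝ) → (s:ℝ) < β →
        z ∈ Oset K F X (xp y v t) (xp y v (s:ℝ)) := by
      intro s h1 h2
      have hmem := hzH s h1 h2
      rw [Hset_decomp hK (x_mem_X hK h0 hXoc hv hαβ hXα hXβ htI.1.le htI.2.le)
        (ll_to_lt h0 (xp_line_mono hK hv h1))] at hmem
      rcases hmem with h|h
      · exact h
      · exact absurd h hzω
    have hzplus := mem_omegaPlus_of hK hv htI.2 hzO
    obtain ⟨s₀, hs₀1, hs₀2⟩ := exists_rat_btwn htI.2
    obtain ⟨σ₀, hσ₀1, hσ₀2⟩ := exists_rat_btwn htI.1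
    have hcpt := orbit_cpt hK hωc hv hαβ hXα hXβ (t := t) htI.1.le htI.2.le
    have hbelow : ∃ r ∈ omegaSet F (xp y v t), coneLE K r z := by
      have hmem : z ∈ Gset K F X (xp y v t) (xp y v (s₀:ℝ)) :=
        omegaPlus_subset_Gset
          (x_mem_X hK h0 hXoc hv hαβ hXα hXβ (le_trans htI.1.le hs₀1.le) hs₀2.le)
          (xp_line_mono hK hv hs₀1) hzplus
      unfold Gset at hmem
      exact below_of_closure hK hFm hcpt (fun w hw => hw.2.1.1) hmem
    have habove : ∃ r' ∈ omegaSet F (xp y v t), coneLE K z r' := by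
      have hmem : z ∈ Hset K F X (xp y v (σ₀:ℝ)) (xp y v t) :=
        omegaMinus_subset_Hset
          (x_mem_X hK h0 hXoc hv hαβ hXα hXβ hσ₀1.le (le_trans hσ₀2.le htI.2.le))
          (xp_line_mono hK hv hσ₀2) hzminus
      unfold Hset at hmem
      exact above_of_closure hK hFm hcpt (fun w hw => hw.2.1.1) hmem
    exact core_contra hK h0 hFc hFm hbelow habove hzω

end Window3

end ULC
namespace ULC

variable {E : Type u} [NormedAddCommGroup E] [NormedSpace ℝ E]
  [MeasurableSpace E] [BorelSpace E]

variable {K : Set E} {F : E → E} {X : Set E}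

lemma line_cover_countable {W : Set E} {y v : E} (hWX : W ⊆ X) (hXopen : IsOpen X)
    (hwin : ∀ p q : ℚ, (p:ℝ) < (q:ℝ) → xp y v (p:ℝ) ∈ X → xp y v (q:ℝ) ∈ X →
      Set.Countable {t | t ∈ Set.Ioo (p:ℝ) (q:ℝ) ∧ xp y v t ∈ W}) :
    Set.Countable {t : ℝ | xp y v t ∈ W} := by
  have hcont : Continuous (xp y v) := by
    unfold xp
    exact continuous_const.add (continuous_id.smul continuous_const)
  have hsub : {t : ℝ | xp y v t ∈ W} ⊆ ⋃ pq : ℚ × ℚ,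
      {t | ((pq.1:ℝ) < (pq.2:ℝ) ∧ xp y v (pq.1:ℝ) ∈ X ∧ xp y v (pq.2:ℝ) ∈ X) ∧
        (t ∈ Set.Ioo (pq.1:ℝ) (pq.2:ℝ) ∧ xp y v t ∈ W)} := by
    intro t ht
    have hXt : xp y v t ∈ X := hWX ht
    have hop : IsOpen ((xp y v) ⁻¹' X) := hXopen.preimage hcont
    obtain ⟨ε, hε, hball⟩ := Metric.isOpen_iff.mp hop t hXt
    obtain ⟨p, hp1, hp2⟩ := exists_rat_btwn (show t - ε < t by linarith)
    obtain ⟨q, hq1, hq2⟩ := exists_rat_btwn (show t < t + ε by linarith)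
    have hpX : xp y v (p:ℝ) ∈ X := by
      apply hball
      simp only [Metric.mem_ball, Real.dist_eq]
      rw [abs_lt]
      constructor <;> linarith
    have hqX : xp y v (q:ℝ) ∈ X := by
      apply hball
      simp only [Metric.mem_ball, Real.dist_eq]
      rw [abs_lt]
      constructor <;> linarith
    exact Set.mem_iUnion.mpr ⟨(p, q), ⟨lt_trans hp2 hq1, hpX, hqX⟩, ⟨hp2, hq1⟩, ht⟩
  refine Set.Countable.mono hsub (Set.countable_iUnion fun pq => ?_)
  by_cases hc : (pq.1:ℝ) < (pq.2:ℝ) ∧ xp y v (pq.1:ℝ) ∈ X ∧ xp y v (pq.2:ℝ) ∈ X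
  · refine Set.Countable.mono ?_ (hwin pq.1 pq.2 hc.1 hc.2.1 hc.2.2)
    exact fun t ht => ht.2
  · refine Set.Countable.mono ?_ Set.countable_empty
    exact fun t ht => absurd ht.1 hc

end ULC

/-- Claim in the proof of Theorem A: under (H1) and (H2), for any `v ≫ 0`, every straight
line parallel to `v` meets `U₊` (and `U₋`) in an at most countable set. -/
theorem unstable_line_countable [CompleteSpace E] [TopologicalSpace.SeparableSpace E]
    (K : Set E) (F : E → E) (X : Set E)
    -- (H1)
    (hK : IsConeOrder K) (hKint : (interior K).Nonempty)
    (hFc : Continuous F) (hFm : StronglyMonotoneMap K F)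
    -- (H2)
    (hXopen : IsOpen X) (hXoc : OrderConvexSet K X) (hXinv : Set.MapsTo F X X)
    (hωc : OmegaCompactIntervals K F X)
    (v : E) (hv : coneLL K 0 v) :
    ∀ y : E,
      (Uplus K F X ∩ Set.range (fun t : ℝ => y + t • v)).Countable ∧
      (Uminus K F X ∩ Set.range (fun t : ℝ => y + t • v)).Countable := by
  intro y
  by_cases h0 : (0:E) ∈ interior K
  · -- degenerate case: the cone is the whole (trivial) space
    have hall : ∀ w : E, w = 0 := by
      have hKuniv : ∀ u : E, u ∈ K := by
        intro u
        rcases eq_or_ne u 0 with rfl|hu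
        · exact ULC.zero_mem hK
        · obtain ⟨ε, hε, hball⟩ := Metric.isOpen_iff.mp isOpen_interior 0 h0
          have hnorm : ‖u‖ ≠ 0 := norm_ne_zero_iff.mpr hu
          have hpos : (0:ℝ) < ‖u‖ := norm_pos_iff.mpr hu
          have humem : (ε/(2*‖u‖)) • u ∈ interior K := by
            apply hball
            simp only [Metric.mem_ball, dist_eq_norm, sub_zero, norm_smul,
              Real.norm_eq_abs]
            rw [abs_of_pos (by positivity)]
            have h2 : ε / (2*‖u‖) * ‖u‖ = ε/2 := by field_simp
            have h3 : ‖u‖ * (ε/(2*‖u‖)) = ε/2 := by field_simp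
            first
            | (rw [h2]; linarith)
            | (rw [h3]; linarith)
            | linarith [h2, h3]
          have hfin := hK.2.2.1 _ (interior_subset humem) ((2*‖u‖)/ε) (by positivity)
          rwa [smul_smul, div_mul_div_cancel₀, div_self (by positivity : (2*‖u‖) ≠ 0),
            one_smul] at hfin
          positivity
      intro w
      have h1 : w ∈ K ∩ (-K) := ⟨hKuniv w, by simpa [Set.mem_neg] using hKuniv (-w)⟩
      rw [hK.2.2.2.2] at h1
      exact h1
    have hcnt : ∀ s : Set E, s.Countable :=
      fun s => Set.Subsingleton.countable (fun a _ b _ => by rw [hall a, hall b])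
    exact ⟨hcnt _, hcnt _⟩
  · have hUX : Uplus K F X ⊆ X := fun x hx => hx.1
    have hUX' : Uminus K F X ⊆ X := fun x hx => hx.1
    have h1 : Set.Countable {t : ℝ | ULC.xp y v t ∈ Uplus K F X} :=
      ULC.line_cover_countable hUX hXopen (fun p q hpq hXp hXq =>
        ULC.window_plus hK h0 hFc hFm hXoc hωc hv hpq hXp hXq)
    have h2 : Set.Countable {t : ℝ | ULC.xp y v t ∈ Uminus K F X} :=
      ULC.line_cover_countable hUX' hXopen (fun p q hpq hXp hXq =>
        ULC.window_minus hK h0 hFc hFm hXoc hωc hv hpq hXp hXq)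
    constructor
    · have hsub : Uplus K F X ∩ Set.range (fun t : ℝ => y + t • v) ⊆
          (fun t : ℝ => y + t • v) '' {t : ℝ | ULC.xp y v t ∈ Uplus K F X} := by
        rintro w ⟨hw, t, rfl⟩
        exact ⟨t, hw, rfl⟩
      exact Set.Countable.mono hsub (h1.image _)
    · have hsub : Uminus K F X ∩ Set.range (fun t : ℝ => y + t • v) ⊆
          (fun t : ℝ => y + t • v) '' {t : ℝ | ULC.xp y v t ∈ Uminus K F X} := by
        rintro w ⟨hw, t, rfl⟩
        exact ⟨t, hw, rfl⟩
      exact Set.Countable.mono hsub (h2.image _)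
end

section
/- A d-hypersurface never contains two strongly ordered points: if (A,B) is an order decomposition of an order-convex open subset X of a strongly ordered Banach space 𝔹 and H = A ∩ B, then there are no points x, y ∈ H with x ≪ y. -/
open Set Topology Filter MeasureTheory Function

universe u

variable {E : Type u} [NormedAddCommGroup E] [NormedSpace ℝ E]
  [MeasurableSpace E] [BorelSpace E]

open Pointwise

/-- A d-hypersurface never contains two strongly ordered points: if `(A, B)` is an order
decomposition of an order-convex open set `X`, then no `x, y ∈ A ∩ B` satisfy `x ≪ y`. -/
theorem dhypersurface_no_strongly_ordered
    (K : Set E) (X A B' : Set E)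
    (hK : IsConeOrder K) (hKint : (interior K).Nonempty)
    (hXopen : IsOpen X) (hXoc : OrderConvexSet K X)
    (hAB : IsOrderDecomp K X A B') :
    ∀ x ∈ A ∩ B', ∀ y ∈ A ∩ B', ¬ coneLL K x y := by
  rintro x ⟨hxA, hxB⟩ y ⟨hyA, hyB⟩ hxy
  obtain ⟨hAne, hBne, hAX, hBX, _, _, hlow, hup, hunion, hintAB⟩ := hAB
  have hxX : x ∈ X := hAX hxA
  have hyX : y ∈ X := hAX hyA
  -- scaling interior of the cone
  have hscal : ∀ α : ℝ, 0 < α → ∀ v ∈ interior K, α • v ∈ interior K := by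
    intro α hα v hv
    have hKs : α • K ⊆ K := by
      rintro _ ⟨w, hw, rfl⟩
      exact hK.2.2.1 w hw α hα
    have : α • interior K = interior (α • K) := (interior_smul₀ (ne_of_gt hα) K).symm
    have hmem : α • v ∈ α • interior K := smul_mem_smul_set hv
    rw [this] at hmem
    exact interior_mono hKs hmem
  -- case x = y
  by_cases hxyeq : x = y
  · subst hxyeq
    have h0 : (0 : E) ∈ interior K := by simpa [coneLL] using hxy
    obtain ⟨ε, hε, hball⟩ := Metric.isOpen_iff.1 isOpen_interior 0 h0
    have hsingle : Metric.ball x ε ⊆ A ∩ B' := by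
      intro w hw
      have hwx : w - x ∈ interior K := hball (by simpa [dist_eq_norm] using hw)
      have hxw : x - w ∈ interior K := by
        have := hball (show -(w - x) ∈ Metric.ball (0 : E) ε by
          simpa [dist_eq_norm, norm_sub_rev] using hw)
        simpa [neg_sub] using this
      have hwK : w - x ∈ K := interior_subset hwx
      have hxwK : x - w ∈ K := interior_subset hxw
      have : w - x ∈ K ∩ (-K) := ⟨hwK, by simpa [neg_sub] using hxwK⟩
      rw [hK.2.2.2.2] at this
      have : w = x := by
        have hz : w - x = 0 := this
        linear_combination (norm := abel_nf) hz
      subst this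
      exact ⟨hxA, hxB⟩
    have : x ∈ interior (A ∩ B') :=
      mem_interior.2 ⟨Metric.ball x ε, hsingle, Metric.isOpen_ball, Metric.mem_ball_self hε⟩
    rw [hintAB] at this
    exact this
  -- main case: x < y
  have hlt : coneLT K x y := ⟨interior_subset hxy, hxyeq⟩
  -- the open order interval is open, contained in X, and in A ∩ B'
  set m : E := x + (1/2 : ℝ) • (y - x) with hm
  have hmx : m - x ∈ interior K := by
    have : m - x = (1/2 : ℝ) • (y - x) := by rw [hm]; abel
    rw [this]
    exact hscal _ (by norm_num) _ hxy
  have hym : y - m ∈ interior K := by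
    have : y - m = (1/2 : ℝ) • (y - x) := by
      rw [hm]
      have : y - (x + (1/2 : ℝ) • (y - x)) = (y - x) - (1/2 : ℝ) • (y - x) := by abel
      rw [this]
      rw [show (y - x) - (1/2 : ℝ) • (y - x) = (1 - 1/2 : ℝ) • (y - x) by
        rw [sub_smul, one_smul]]
      norm_num
    rw [this]
    exact hscal _ (by norm_num) _ hxy
  have hmX : m ∈ X := hXoc x hxX y hyX hlt ⟨interior_subset hmx, interior_subset hym⟩
  -- the set ordOO K x y
  have hOsub : ordOO K x y ⊆ A ∩ B' := by
    rintro z ⟨hxz, hzy⟩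
    have hzX : z ∈ X := hXoc x hxX y hyX hlt ⟨interior_subset hxz, interior_subset hzy⟩
    exact ⟨hlow y hyA z hzX (interior_subset hzy), hup x hxB z hzX (interior_subset hxz)⟩
  have hOopen : IsOpen (ordOO K x y) := by
    have h1 : ordOO K x y =
        ((fun z : E => z - x) ⁻¹' interior K) ∩ ((fun z : E => y - z) ⁻¹' interior K) := by
      ext z; exact Iff.rfl
    rw [h1]
    exact ((isOpen_interior.preimage (by continuity)).inter
      (isOpen_interior.preimage (by continuity)))
  have hmO : m ∈ ordOO K x y := ⟨hmx, hym⟩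
  have : m ∈ interior (A ∩ B') :=
    mem_interior.2 ⟨ordOO K x y, hOsub, hOopen, hmO⟩
  rw [hintAB] at this
  exact this
end

section
/- If (A,B) is an order decomposition of X with nonempty boundary H = A ∩ B, then H = ∂A = ∂B, where ∂ denotes the boundary relative to X; moreover, if (A,B) is invariant (F(A) ⊆ A and F(B) ⊆ B), then H is invariant, i.e., F(H) ⊆ H. -/
open Set Topology Filter MeasureTheory Function

universe u

variable {E : Type u} [NormedAddCommGroup E] [NormedSpace ℝ E]
  [MeasurableSpace E] [BorelSpace E]

open Pointwise in
/-- If `(A, B)` is an order decomposition of `X` with nonempty boundary `H = A ∩ B`, then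
`H = ∂A = ∂B` (boundary relative to `X`); moreover, invariance of `(A, B)` implies
invariance of `H`. -/
theorem boundary_of_order_decomposition
    (K : Set E) (X A B' : Set E) (F : E → E)
    (hK : IsConeOrder K) (hKint : (interior K).Nonempty)
    (hXopen : IsOpen X) (hXoc : OrderConvexSet K X) (hF : Set.MapsTo F X X)
    (hAB : IsOrderDecomp K X A B') (hne : (A ∩ B').Nonempty) :
    A ∩ B' = X ∩ frontier A ∧ A ∩ B' = X ∩ frontier B' ∧
      (F '' A ⊆ A → F '' B' ⊆ B' → F '' (A ∩ B') ⊆ A ∩ B') := by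

  obtain ⟨hAne, hBne, hAX, hBX, hAcl, hBcl, hAlo, hBup, hABu, hint⟩ := hAB
  obtain ⟨v, hv⟩ := hKint
  have hcone := hK.2.2.1
  have hsmul : ∀ t : ℝ, 0 < t → t • v ∈ interior K := by
    intro t ht
    have h1 : IsOpen (t • interior K) := isOpen_interior.smul₀ (ne_of_gt ht)
    have h2 : t • interior K ⊆ K := by
      rintro z ⟨w, hw, rfl⟩
      exact hcone w (interior_subset hw) t ht
    exact interior_maximal h2 h1 ⟨v, hv, rfl⟩
  -- main cone argument
  have key : ∀ x ∈ A, x ∈ B' → (∀ s : ℝ, s = 1 ∨ s = -1 →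
      True) → True := fun _ _ _ _ => trivial
  have hnotIntA : ∀ x ∈ A, x ∈ B' → x ∉ interior A := by
    intro x hxA hxB hxI
    have hxX : x ∈ X := hAX hxA
    have hopen : IsOpen (interior A ∩ X) := isOpen_interior.inter hXopen
    obtain ⟨ε, hε, hball⟩ := Metric.isOpen_iff.mp hopen x ⟨hxI, hxX⟩
    set t : ℝ := ε / (2 * (‖v‖ + 1)) with ht_def
    have hvpos : (0:ℝ) < ‖v‖ + 1 := by positivity
    have ht : 0 < t := by positivity
    have htv : ‖t • v‖ < ε := by
      rw [norm_smul, Real.norm_eq_abs, abs_of_pos ht]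
      have h1 : t * ‖v‖ < t * (‖v‖ + 1) := by nlinarith
      have h2 : t * (‖v‖ + 1) = ε / 2 := by
        field_simp [ht_def]
        linarith [show t * (2 * (‖v‖ + 1)) = ε from by rw [ht_def]; exact div_mul_cancel₀ _ (by positivity)]
      nlinarith
    set y := x + t • v with hy_def
    have hyI : y ∈ interior A ∩ X := by
      apply hball
      simp only [Metric.mem_ball, dist_eq_norm]
      simpa [hy_def] using htv
    obtain ⟨δ, hδ, hballK⟩ := Metric.isOpen_iff.mp isOpen_interior (t • v) (hsmul t ht)
    obtain ⟨δ', hδ', hball'⟩ := Metric.isOpen_iff.mp hopen y hyI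
    have hsub : Metric.ball y (min δ δ') ⊆ A ∩ B' := by
      intro z hz
      have hzd : dist z y < min δ δ' := hz
      have hzA : z ∈ interior A ∩ X := hball' (by
        simp only [Metric.mem_ball]; exact lt_of_lt_of_le hzd (min_le_right _ _))
      have hzK : z - x ∈ interior K := by
        apply hballK
        simp only [Metric.mem_ball, dist_eq_norm]
        have : z - x - t • v = z - y := by rw [hy_def]; abel
        rw [this]
        calc ‖z - y‖ = dist z y := by rw [dist_eq_norm]
          _ < min δ δ' := hzd
          _ ≤ δ := min_le_left _ _
      exact ⟨interior_subset hzA.1, hBup x hxB z hzA.2 (interior_subset hzK)⟩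
    have hy : y ∈ interior (A ∩ B') :=
      mem_interior.mpr ⟨Metric.ball y (min δ δ'), hsub, Metric.isOpen_ball,
        Metric.mem_ball_self (lt_min hδ hδ')⟩
    rw [hint] at hy
    exact hy
  have hnotIntB : ∀ x ∈ A, x ∈ B' → x ∉ interior B' := by
    intro x hxA hxB hxI
    have hxX : x ∈ X := hAX hxA
    have hopen : IsOpen (interior B' ∩ X) := isOpen_interior.inter hXopen
    obtain ⟨ε, hε, hball⟩ := Metric.isOpen_iff.mp hopen x ⟨hxI, hxX⟩
    set t : ℝ := ε / (2 * (‖v‖ + 1)) with ht_def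
    have hvpos : (0:ℝ) < ‖v‖ + 1 := by positivity
    have ht : 0 < t := by positivity
    have htv : ‖t • v‖ < ε := by
      rw [norm_smul, Real.norm_eq_abs, abs_of_pos ht]
      have h1 : t * ‖v‖ < t * (‖v‖ + 1) := by nlinarith
      have h2 : t * (‖v‖ + 1) = ε / 2 := by
        field_simp [ht_def]
        linarith [show t * (2 * (‖v‖ + 1)) = ε from by rw [ht_def]; exact div_mul_cancel₀ _ (by positivity)]
      nlinarith
    set y := x - t • v with hy_def
    have hyI : y ∈ interior B' ∩ X := by
      apply hball
      simp only [Metric.mem_ball, dist_eq_norm]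
      have : y - x = -(t • v) := by rw [hy_def]; abel
      rw [this, norm_neg]
      exact htv
    obtain ⟨δ, hδ, hballK⟩ := Metric.isOpen_iff.mp isOpen_interior (t • v) (hsmul t ht)
    obtain ⟨δ', hδ', hball'⟩ := Metric.isOpen_iff.mp hopen y hyI
    have hsub : Metric.ball y (min δ δ') ⊆ A ∩ B' := by
      intro z hz
      have hzd : dist z y < min δ δ' := hz
      have hzB : z ∈ interior B' ∩ X := hball' (by
        simp only [Metric.mem_ball]; exact lt_of_lt_of_le hzd (min_le_right _ _))
      have hzK : x - z ∈ interior K := by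
        apply hballK
        simp only [Metric.mem_ball, dist_eq_norm]
        have : x - z - t • v = -(z - y) := by rw [hy_def]; abel
        rw [this, norm_neg]
        calc ‖z - y‖ = dist z y := by rw [dist_eq_norm]
          _ < min δ δ' := hzd
          _ ≤ δ := min_le_left _ _
      exact ⟨hAlo x hxA z hzB.2 (interior_subset hzK), interior_subset hzB.1⟩
    have hy : y ∈ interior (A ∩ B') :=
      mem_interior.mpr ⟨Metric.ball y (min δ δ'), hsub, Metric.isOpen_ball,
        Metric.mem_ball_self (lt_min hδ hδ')⟩
    rw [hint] at hy
    exact hy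
  -- X \ B' and X \ A are open
  have hXBopen : IsOpen (X \ B') := by
    have : X \ B' = X ∩ (closure B')ᶜ := by
      ext z
      constructor
      · rintro ⟨hzX, hzB⟩
        exact ⟨hzX, fun hc => hzB (hBcl ⟨hc, hzX⟩)⟩
      · rintro ⟨hzX, hzc⟩
        exact ⟨hzX, fun hb => hzc (subset_closure hb)⟩
    rw [this]
    exact hXopen.inter (isClosed_closure.isOpen_compl)
  have hXAopen : IsOpen (X \ A) := by
    have : X \ A = X ∩ (closure A)ᶜ := by
      ext z
      constructor
      · rintro ⟨hzX, hzA⟩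
        exact ⟨hzX, fun hc => hzA (hAcl ⟨hc, hzX⟩)⟩
      · rintro ⟨hzX, hzc⟩
        exact ⟨hzX, fun ha => hzc (subset_closure ha)⟩
    rw [this]
    exact hXopen.inter (isClosed_closure.isOpen_compl)
  refine ⟨?_, ?_, ?_⟩
  · apply Set.Subset.antisymm
    · rintro x ⟨hxA, hxB⟩
      exact ⟨hAX hxA, subset_closure hxA, hnotIntA x hxA hxB⟩
    · rintro x ⟨hxX, hxcl, hxnI⟩
      have hxA : x ∈ A := hAcl ⟨hxcl, hxX⟩
      refine ⟨hxA, ?_⟩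
      by_contra hxB
      have hsub : X \ B' ⊆ A := by
        rintro z ⟨hzX, hzB⟩
        rcases (hABu ▸ hzX : z ∈ A ∪ B') with h | h
        · exact h
        · exact absurd h hzB
      exact hxnI (interior_maximal hsub hXBopen ⟨hxX, hxB⟩)
  · apply Set.Subset.antisymm
    · rintro x ⟨hxA, hxB⟩
      exact ⟨hAX hxA, subset_closure hxB, hnotIntB x hxA hxB⟩
    · rintro x ⟨hxX, hxcl, hxnI⟩
      have hxB : x ∈ B' := hBcl ⟨hxcl, hxX⟩
      refine ⟨?_, hxB⟩
      by_contra hxA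
      have hsub : X \ A ⊆ B' := by
        rintro z ⟨hzX, hzA⟩
        rcases (hABu ▸ hzX : z ∈ A ∪ B') with h | h
        · exact absurd h hzA
        · exact h
      exact hxnI (interior_maximal hsub hXAopen ⟨hxX, hxA⟩)
  · intro hFA hFB
    rintro z ⟨w, ⟨hwA, hwB⟩, rfl⟩
    exact ⟨hFA ⟨w, hwA, rfl⟩, hFB ⟨w, hwB, rfl⟩⟩
end

section
/- In a separable Banach space 𝔹, no nonempty open set is shy; equivalently, every shy set has empty interior. -/
open Set Topology Filter MeasureTheory Function

universe u

variable {E : Type u} [NormedAddCommGroup E] [NormedSpace ℝ E]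
  [MeasurableSpace E] [BorelSpace E]

/-- In a separable Banach space, no nonempty open set is shy; equivalently, every shy set
has empty interior. -/
theorem no_nonempty_open_shy [CompleteSpace E] [TopologicalSpace.SeparableSpace E] :
    (∀ U : Set E, IsOpen U → U.Nonempty → ¬ IsShy U) ∧
    (∀ W : Set E, IsShy W → interior W = ∅) := by
  have key : ∀ W : Set E, IsShy W → interior W = ∅ := by
    intro W hW
    by_contra h
    obtain ⟨W', hWW', _, μ, hμ0, ⟨Q, hQc, hQnull⟩, htrans⟩ := hW
    obtain ⟨x0, hx0⟩ := Set.nonempty_iff_ne_empty.2 h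
    obtain ⟨r, hr, hball⟩ := Metric.isOpen_iff.1 isOpen_interior x0 hx0
    have hballW' : Metric.ball x0 r ⊆ W' := hball.trans (interior_subset.trans hWW')
    -- every ball of radius r is null
    have hnull : ∀ q : E, μ (Metric.ball q r) = 0 := by
      intro q
      have hsub : Metric.ball q r ⊆ (fun y => y - (q - x0)) ⁻¹' W' := by
        intro y hy
        apply hballW'
        simp only [Metric.mem_ball] at hy ⊢
        have : y - (q - x0) - x0 = y - q := by abel
        rw [dist_eq_norm, this, ← dist_eq_norm]
        exact hy
      exact le_antisymm ((measure_mono hsub).trans (htrans (q - x0)).le) zero_le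
    -- cover Q by finitely many balls
    obtain ⟨t, -, htcov⟩ := hQc.elim_nhds_subcover (fun q => Metric.ball q r)
      (fun q _ => Metric.ball_mem_nhds q hr)
    have hQ0 : μ Q = 0 := by
      refine le_antisymm ((measure_mono htcov).trans ?_) zero_le
      exact le_of_eq (measure_biUnion_null_iff t.countable_toSet |>.2 fun q _ => hnull q)
    have huniv : μ Set.univ = 0 := by
      have : μ Set.univ ≤ μ Q + μ Qᶜ := by
        rw [← Set.union_compl_self Q]; exact measure_union_le _ _
      simpa [hQ0, hQnull] using this
    exact hμ0 (Measure.measure_univ_eq_zero.1 huniv)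
  refine ⟨fun U hU hUne hshy => ?_, key⟩
  have := key U hshy
  rw [hU.interior_eq] at this
  exact hUne.ne_empty this
end
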